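/- arXiv:2004.03117 — 5 statements merged into one kernel-verified Lean document; each statement's English description precedes it below -/
import Mathlib

section
/- Fix $n \ge 1$, a real $s > 1$, and a sequence $(t_m)_{m \ge 1}$ of real numbers. Define the truncated multi-interpolated values $\zeta_n^{\vec{t}}(\{s\}_k) = \sum_{n \ge \ell_1 \ge \cdots \ge \ell_k \ge 1} \vec{t}^{\vec\sigma(\vec\ell)} \prod_{j=1}^k \ell_j^{-s}$ for $k \ge 1$, with $\zeta_n^{\vec{t}}(\{s\}_0) = 1$. Then as formal power series (equivalently, as rational-function identities in $z$ in a neighborhood of $0$): $\sum_{k \ge 0} \zeta_n^{\vec{t}}(\{s\}_k) z^k = \prod_{m=1}^n \Big(1 + \frac{m^{-s} z}{1 - m^{-s} t_m z}\Big)$. -/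
open Finset

/-- The finite set of weakly decreasing `k`-tuples with entries in `{1,…,n}`. -/
def decTuples (n k : ℕ) : Finset (Fin k → ℕ) :=
  (Fintype.piFinset fun _ : Fin k => Finset.Icc 1 n).filter
    fun f => ∀ i j : Fin k, i ≤ j → f j ≤ f i

/-- The interpolation weight `∏_j t_j^{σ_j(ℓ)}`: a factor `t (f (r+1))` for each
consecutive equality `f r = f (r+1)`. -/
def wt (t : ℕ → ℝ) {k : ℕ} (f : Fin k → ℕ) : ℝ :=
  ∏ r ∈ Finset.range k,
    if h : r + 1 < k then
      (if f ⟨r, Nat.lt_of_succ_lt h⟩ = f ⟨r + 1, h⟩ then t (f ⟨r + 1, h⟩) else 1)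
    else 1

/-- The truncated multi-interpolated value `ζ_n^{t}({s}_k)`. -/
noncomputable def zetaTrunc (n k : ℕ) (s : ℝ) (t : ℕ → ℝ) : ℝ :=
  ∑ f ∈ decTuples n k, wt t f * ∏ j : Fin k, ((f j : ℝ) ^ s)⁻¹

/-- Membership criterion for `decTuples`. -/
lemma mem_decTuples {n k : ℕ} {f : Fin k → ℕ} :
    f ∈ decTuples n k ↔ (∀ i, f i ∈ Finset.Icc 1 n) ∧ ∀ i j : Fin k, i ≤ j → f j ≤ f i := by
  simp [decTuples, Fintype.mem_piFinset]

/-- The head-equals-`n` part of `zetaTrunc`. -/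
noncomputable def zetaE (n k : ℕ) (s : ℝ) (t : ℕ → ℝ) : ℝ :=
  ∑ f ∈ (decTuples n k).filter (fun f => ∃ h : 0 < k, f ⟨0, h⟩ = n),
    wt t f * ∏ j : Fin k, ((f j : ℝ) ^ s)⁻¹

lemma zetaE_zero (n : ℕ) (s : ℝ) (t : ℕ → ℝ) : zetaE n 0 s t = 0 := by
  have : (decTuples n 0).filter (fun f => ∃ h : 0 < 0, f ⟨0, h⟩ = n) = ∅ := by
    apply Finset.filter_false_of_mem
    intro f _
    rintro ⟨h, -⟩
    exact absurd h (lt_irrefl 0)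
  simp [zetaE, this]

lemma zetaTrunc_zero_k (n : ℕ) (s : ℝ) (t : ℕ → ℝ) : zetaTrunc n 0 s t = 1 := by
  have h : decTuples n 0 = {(fun i => i.elim0)} := by
    ext f
    simp only [mem_decTuples, Finset.mem_singleton]
    constructor
    · intro _; funext i; exact i.elim0
    · intro _; exact ⟨fun i => i.elim0, fun i => i.elim0⟩
  simp [zetaTrunc, h, wt]

lemma zetaTrunc_zero_n (k : ℕ) (s : ℝ) (t : ℕ → ℝ) (hk : k ≠ 0) :
    zetaTrunc 0 k s t = 0 := by
  have h : decTuples 0 k = ∅ := by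
    ext f
    simp only [mem_decTuples, Finset.notMem_empty, iff_false]
    rintro ⟨h1, -⟩
    obtain ⟨k', rfl⟩ := Nat.exists_eq_succ_of_ne_zero hk
    have := h1 0
    simp at this
  simp [zetaTrunc, h]

/-- Tuples in `decTuples (n+1) k` whose head is not `n+1` are exactly `decTuples n k`. -/
lemma filter_not_head (n k : ℕ) :
    (decTuples (n+1) k).filter (fun f => ¬ ∃ h : 0 < k, f ⟨0, h⟩ = n+1) = decTuples n k := by
  ext f
  simp only [Finset.mem_filter, mem_decTuples, Finset.mem_Icc]
  constructor
  · rintro ⟨⟨h1, h2⟩, h3⟩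
    refine ⟨fun i => ⟨(h1 i).1, ?_⟩, h2⟩
    have hk : 0 < k := i.pos
    have hle : f i ≤ f ⟨0, hk⟩ := h2 ⟨0, hk⟩ i (Fin.mk_le_of_le_val (Nat.zero_le _))
    have hne : f ⟨0, hk⟩ ≠ n + 1 := fun he => h3 ⟨hk, he⟩
    have : f ⟨0, hk⟩ ≤ n := Nat.lt_succ_iff.mp (lt_of_le_of_ne (h1 ⟨0, hk⟩).2 hne)
    exact le_trans hle this
  · rintro ⟨h1, h2⟩
    refine ⟨⟨fun i => ⟨(h1 i).1, le_trans (h1 i).2 (Nat.le_succ n)⟩, h2⟩, ?_⟩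
    rintro ⟨hk, he⟩
    have := (h1 ⟨0, hk⟩).2
    omega

/-- Splitting `zetaTrunc` by whether the head is maximal. -/
lemma zetaTrunc_split (n k : ℕ) (s : ℝ) (t : ℕ → ℝ) :
    zetaTrunc (n+1) k s t = zetaTrunc n k s t + zetaE (n+1) k s t := by
  classical
  have := Finset.sum_filter_add_sum_filter_not (decTuples (n+1) k)
    (fun f => ∃ h : 0 < k, f ⟨0, h⟩ = n+1)
    (fun f => wt t f * ∏ j : Fin k, ((f j : ℝ) ^ s)⁻¹)
  rw [zetaTrunc, ← this, filter_not_head]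
  rw [zetaE, zetaTrunc]
  ring

/-- `wt` of a `Fin.cons`. -/
lemma wt_cons (t : ℕ → ℝ) {k : ℕ} (x : ℕ) (g : Fin k → ℕ) :
    wt t (Fin.cons x g : Fin (k+1) → ℕ) =
      (if h : 0 < k then (if x = g ⟨0, h⟩ then t (g ⟨0, h⟩) else 1) else 1) * wt t g := by
  unfold wt
  rw [Finset.prod_range_succ']
  rw [mul_comm]
  congr 1
  · -- the r = 0 factor
    by_cases h : 0 < k
    · have h1 : 0 + 1 < k + 1 := Nat.succ_lt_succ h
      rw [dif_pos h1, dif_pos h]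
      have e0 : (Fin.cons x g : Fin (k+1) → ℕ) ⟨0, Nat.lt_of_succ_lt h1⟩ = x := by
        rw [Fin.mk_zero, Fin.cons_zero]
      have e1 : (Fin.cons x g : Fin (k+1) → ℕ) ⟨0 + 1, h1⟩ = g ⟨0, h⟩ := by
        rw [show (⟨0 + 1, h1⟩ : Fin (k+1)) = Fin.succ ⟨0, h⟩ from rfl, Fin.cons_succ]
      rw [e0, e1]
    · have hk : k = 0 := Nat.eq_zero_of_not_pos h
      subst hk
      simp
  · -- the shifted factors
    apply Finset.prod_congr rfl
    intro r hr
    by_cases h : r + 1 < k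
    · have h1 : r + 1 + 1 < k + 1 := Nat.succ_lt_succ h
      have h0 : r < k := Nat.lt_of_succ_lt h
      rw [dif_pos h, dif_pos h1]
      have e0 : (Fin.cons x g : Fin (k+1) → ℕ) ⟨r + 1, Nat.lt_of_succ_lt h1⟩ =
          g ⟨r, h0⟩ := by
        rw [show (⟨r + 1, Nat.lt_of_succ_lt h1⟩ : Fin (k+1)) = Fin.succ ⟨r, h0⟩ from rfl,
          Fin.cons_succ]
      have e1 : (Fin.cons x g : Fin (k+1) → ℕ) ⟨r + 1 + 1, h1⟩ = g ⟨r + 1, h⟩ := by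
        rw [show (⟨r + 1 + 1, h1⟩ : Fin (k+1)) = Fin.succ ⟨r + 1, h⟩ from rfl, Fin.cons_succ]
      rw [e0, e1]
    · have h1 : ¬ (r + 1 + 1 < k + 1) := fun hc => h (Nat.lt_of_succ_lt_succ hc)
      rw [dif_neg h, dif_neg h1]

/-- Peeling the top entry from `zetaE`. -/
lemma zetaE_peel (n k : ℕ) (s : ℝ) (t : ℕ → ℝ) :
    zetaE (n+1) (k+1) s t =
      (((n+1 : ℕ) : ℝ) ^ s)⁻¹ *
        (t (n+1) * zetaE (n+1) k s t + zetaTrunc n k s t) := by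
  classical
  -- rewrite as a sum over `decTuples (n+1) k`
  have key : zetaE (n+1) (k+1) s t =
      ∑ g ∈ decTuples (n+1) k,
        (wt t (Fin.cons (n+1) g : Fin (k+1) → ℕ) *
          ∏ j : Fin (k+1), (((Fin.cons (n+1) g : Fin (k+1) → ℕ) j : ℝ) ^ s)⁻¹) := by
    rw [zetaE]
    refine Finset.sum_nbij' (fun f => Fin.tail f) (fun g => Fin.cons (n+1) g) ?_ ?_ ?_ ?_ ?_
    · -- tail maps into decTuples
      intro f hf
      rw [Finset.mem_filter, mem_decTuples] at hf
      obtain ⟨⟨h1, h2⟩, -⟩ := hf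
      rw [mem_decTuples]
      exact ⟨fun i => h1 i.succ, fun i j hij => h2 i.succ j.succ (Fin.succ_le_succ_iff.mpr hij)⟩
    · -- cons maps into the filtered set
      intro g hg
      rw [mem_decTuples] at hg
      obtain ⟨h1, h2⟩ := hg
      rw [Finset.mem_filter, mem_decTuples]
      refine ⟨⟨?_, ?_⟩, ⟨Nat.succ_pos k, by rw [Fin.mk_zero, Fin.cons_zero]⟩⟩
      · intro i
        induction i using Fin.cases with
        | zero => rw [Fin.cons_zero]; simp
        | succ i' => rw [Fin.cons_succ]; exact h1 i'
      · intro i j hij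
        induction j using Fin.cases with
        | zero =>
            have : i = 0 := le_antisymm (by simpa using hij) (Fin.zero_le i)
            subst this; exact le_rfl
        | succ j' =>
            rw [Fin.cons_succ]
            induction i using Fin.cases with
            | zero =>
                rw [Fin.cons_zero]
                exact le_trans (Finset.mem_Icc.mp (h1 j')).2 le_rfl
            | succ i' =>
                rw [Fin.cons_succ]
                refine h2 i' j' ?_
                have := hij
                rwa [Fin.succ_le_succ_iff] at this
    · -- left inverse
      intro f hf
      rw [Finset.mem_filter] at hf
      obtain ⟨-, hk, hf0⟩ := hf
      have : f ⟨0, hk⟩ = f 0 := by rw [Fin.mk_zero]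
      rw [this] at hf0
      rw [← hf0]
      exact Fin.cons_self_tail f
    · -- right inverse
      intro g _
      simp [Fin.tail_cons]
    · -- terms agree
      intro f hf
      rw [Finset.mem_filter] at hf
      obtain ⟨-, hk, hf0⟩ := hf
      have h0 : f ⟨0, hk⟩ = f 0 := by rw [Fin.mk_zero]
      rw [h0] at hf0
      rw [← hf0, Fin.cons_self_tail f]
  rw [key]
  -- evaluate the cons weights
  have term_eq : ∀ g ∈ decTuples (n+1) k,
      (wt t (Fin.cons (n+1) g : Fin (k+1) → ℕ) *
        ∏ j : Fin (k+1), (((Fin.cons (n+1) g : Fin (k+1) → ℕ) j : ℝ) ^ s)⁻¹) =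
      (((n+1 : ℕ) : ℝ) ^ s)⁻¹ *
        ((if h : 0 < k then (if n+1 = g ⟨0, h⟩ then t (g ⟨0, h⟩) else 1) else 1) *
          (wt t g * ∏ j : Fin k, ((g j : ℝ) ^ s)⁻¹)) := by
    intro g _
    rw [wt_cons]
    have : (∏ j : Fin (k+1), (((Fin.cons (n+1) g : Fin (k+1) → ℕ) j : ℝ) ^ s)⁻¹) =
        ((((n+1 : ℕ) : ℝ)) ^ s)⁻¹ * ∏ j : Fin k, ((g j : ℝ) ^ s)⁻¹ := by
      rw [show (fun j : Fin (k+1) => (((Fin.cons (n+1) g : Fin (k+1) → ℕ) j : ℝ) ^ s)⁻¹) =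
          Fin.cons ((((n+1 : ℕ) : ℝ)) ^ s)⁻¹ (fun j : Fin k => ((g j : ℝ) ^ s)⁻¹) from ?_]
      · exact Fin.prod_cons _ _
      · funext j
        refine Fin.cases ?_ ?_ j
        · simp
        · intro j'; simp
    rw [this]
    ring
  rw [Finset.sum_congr rfl term_eq, ← Finset.mul_sum]
  congr 1
  -- split the sum over `g` by whether the head of `g` is `n+1`
  rw [← Finset.sum_filter_add_sum_filter_not (decTuples (n+1) k)
    (fun g => ∃ h : 0 < k, g ⟨0, h⟩ = n+1)]
  congr 1
  · -- head = n+1 part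
    rw [zetaE, Finset.mul_sum]
    apply Finset.sum_congr rfl
    intro g hg
    rw [Finset.mem_filter] at hg
    obtain ⟨-, hk, hgo⟩ := hg
    rw [dif_pos hk, if_pos hgo.symm, hgo]
  · -- head ≠ n+1 part
    rw [filter_not_head, zetaTrunc]
    apply Finset.sum_congr rfl
    intro g hg
    rw [mem_decTuples] at hg
    obtain ⟨h1, -⟩ := hg
    by_cases hk : 0 < k
    · rw [dif_pos hk]
      have : n + 1 ≠ g ⟨0, hk⟩ := by
        have := (Finset.mem_Icc.mp (h1 ⟨0, hk⟩)).2
        omega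
      rw [if_neg this, one_mul]
    · rw [dif_neg hk, one_mul]

/-- Absolute bound on `wt`. -/
lemma abs_wt_le (t : ℕ → ℝ) {k : ℕ} (f : Fin k → ℕ) {T : ℝ} (hT : 1 ≤ T)
    (ht : ∀ i, |t (f i)| ≤ T) : |wt t f| ≤ T ^ k := by
  unfold wt
  rw [Finset.abs_prod]
  calc (∏ r ∈ Finset.range k, |if h : r + 1 < k then
        (if f ⟨r, Nat.lt_of_succ_lt h⟩ = f ⟨r + 1, h⟩ then t (f ⟨r + 1, h⟩) else 1)
      else 1|) ≤ ∏ _r ∈ Finset.range k, T := by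
        apply Finset.prod_le_prod (fun _ _ => abs_nonneg _)
        intro r _
        by_cases h : r + 1 < k
        · rw [dif_pos h]
          by_cases he : f ⟨r, Nat.lt_of_succ_lt h⟩ = f ⟨r + 1, h⟩
          · rw [if_pos he]; exact ht _
          · rw [if_neg he]; simpa using hT
        · rw [dif_neg h]; simpa using hT
    _ = T ^ k := by rw [Finset.prod_const, Finset.card_range]

/-- Absolute bound on the power product. -/
lemma abs_prod_rpow_le {k : ℕ} (f : Fin k → ℕ) {s : ℝ} (hs : 0 ≤ s)
    (hf : ∀ i, 1 ≤ f i) : |∏ j : Fin k, ((f j : ℝ) ^ s)⁻¹| ≤ 1 := by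
  rw [Finset.abs_prod]
  apply Finset.prod_le_one
  · intro i _; exact abs_nonneg _
  · intro i _
    have h1 : (1 : ℝ) ≤ (f i : ℝ) := by exact_mod_cast hf i
    have h2 : (1 : ℝ) ≤ (f i : ℝ) ^ s := Real.one_le_rpow h1 hs
    rw [abs_of_nonneg (inv_nonneg.mpr (le_trans zero_le_one h2))]
    exact inv_le_one_of_one_le₀ h2

/-- Uniform geometric bound on partial sums over subsets of `decTuples`. -/
lemma abs_sum_decTuples_le {n' n k : ℕ} (hn : n' ≤ n) {s : ℝ} (hs : 0 ≤ s)
    (t : ℕ → ℝ) {T : ℝ} (hT : 1 ≤ T) (ht : ∀ m ∈ Finset.Icc 1 n, |t m| ≤ T)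
    (S : Finset (Fin k → ℕ)) (hS : S ⊆ decTuples n' k) :
    |∑ f ∈ S, wt t f * ∏ j : Fin k, ((f j : ℝ) ^ s)⁻¹| ≤ ((n : ℝ) * T) ^ k := by
  calc |∑ f ∈ S, wt t f * ∏ j : Fin k, ((f j : ℝ) ^ s)⁻¹|
      ≤ ∑ f ∈ S, |wt t f * ∏ j : Fin k, ((f j : ℝ) ^ s)⁻¹| :=
        Finset.abs_sum_le_sum_abs _ _
    _ ≤ S.card • (T ^ k) := by
        apply Finset.sum_le_card_nsmul
        intro f hf
        have hmem := mem_decTuples.mp (hS hf)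
        have hfi : ∀ i, f i ∈ Finset.Icc 1 n := by
          intro i
          have := Finset.mem_Icc.mp (hmem.1 i)
          exact Finset.mem_Icc.mpr ⟨this.1, le_trans this.2 hn⟩
        rw [abs_mul]
        calc |wt t f| * |∏ j : Fin k, ((f j : ℝ) ^ s)⁻¹|
            ≤ T ^ k * 1 := by
              apply mul_le_mul
              · exact abs_wt_le t f hT (fun i => ht _ (hfi i))
              · exact abs_prod_rpow_le f hs (fun i => (Finset.mem_Icc.mp (hmem.1 i)).1)
              · exact abs_nonneg _
              · positivity
          _ = T ^ k := mul_one _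
    _ ≤ ((n : ℝ) ^ k) * T ^ k := by
        rw [nsmul_eq_mul]
        apply mul_le_mul_of_nonneg_right _ (by positivity)
        have h1 : S.card ≤ n' ^ k := by
          calc S.card ≤ (decTuples n' k).card := Finset.card_le_card hS
            _ ≤ (Fintype.piFinset fun _ : Fin k => Finset.Icc 1 n').card :=
                Finset.card_le_card (Finset.filter_subset _ _)
            _ = n' ^ k := by
                rw [Fintype.card_piFinset]
                simp [Nat.card_Icc]
        calc (S.card : ℝ) ≤ ((n' ^ k : ℕ) : ℝ) := by exact_mod_cast h1
          _ = ((n' : ℝ)) ^ k := by push_cast; ring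
          _ ≤ ((n : ℝ)) ^ k := by
              apply pow_le_pow_left₀ (by positivity)
              exact_mod_cast hn
    _ = ((n : ℝ) * T) ^ k := (mul_pow _ _ _).symm

lemma abs_zetaE_le {n' n : ℕ} (hn : n' ≤ n) (k : ℕ) {s : ℝ} (hs : 0 ≤ s)
    (t : ℕ → ℝ) {T : ℝ} (hT : 1 ≤ T) (ht : ∀ m ∈ Finset.Icc 1 n, |t m| ≤ T) :
    |zetaE n' k s t| ≤ ((n : ℝ) * T) ^ k :=
  abs_sum_decTuples_le hn hs t hT ht _ (Finset.filter_subset _ _)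

/-- Generating function of the truncated multi-interpolated values:
`∑_{k≥0} ζ_n^t({s}_k) z^k = ∏_{m=1}^n (1 + m^{-s} z / (1 - m^{-s} t_m z))`
for `z` in a neighbourhood of `0`. -/
theorem zetaTrunc_generating_function
    (n : ℕ) (hn : 1 ≤ n) (s : ℝ) (hs : 1 < s) (t : ℕ → ℝ) :
    ∃ ε > (0 : ℝ), ∀ z : ℝ, |z| < ε →
      HasSum (fun k : ℕ => zetaTrunc n k s t * z ^ k)
        (∏ m ∈ Finset.Icc 1 n,
          (1 + ((m : ℝ) ^ s)⁻¹ * z / (1 - ((m : ℝ) ^ s)⁻¹ * t m * z))) := by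
  classical
  set T : ℝ := 1 + ∑ m ∈ Finset.Icc 1 n, |t m| with hTdef
  have hT1 : (1 : ℝ) ≤ T := by
    have : (0 : ℝ) ≤ ∑ m ∈ Finset.Icc 1 n, |t m| :=
      Finset.sum_nonneg fun _ _ => abs_nonneg _
    simp [hTdef]; linarith
  have hT0 : (0 : ℝ) < T := lt_of_lt_of_le one_pos hT1
  have ht : ∀ m ∈ Finset.Icc 1 n, |t m| ≤ T := by
    intro m hm
    have : |t m| ≤ ∑ m' ∈ Finset.Icc 1 n, |t m'| :=
      Finset.single_le_sum (f := fun m' => |t m'|) (fun _ _ => abs_nonneg _) hm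
    simp [hTdef]; linarith
  have hnpos : (0 : ℝ) < (n : ℝ) := by exact_mod_cast hn
  refine ⟨(2 * (n : ℝ) * T)⁻¹, by positivity, ?_⟩
  intro z hz
  have hs0 : (0 : ℝ) ≤ s := le_of_lt (lt_trans one_pos hs)
  -- key smallness facts
  have hr : (n : ℝ) * T * |z| < 1 / 2 := by
    have h2 : 0 < 2 * (n : ℝ) * T := by positivity
    calc (n : ℝ) * T * |z| < (n : ℝ) * T * (2 * (n : ℝ) * T)⁻¹ := by
          apply mul_lt_mul_of_pos_left hz (by positivity)
      _ = 1 / 2 := by field_simp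
  have hrnn : (0 : ℝ) ≤ (n : ℝ) * T * |z| := by positivity
  -- `a m` facts
  have ha_mem : ∀ m ∈ Finset.Icc 1 n, (0 : ℝ) < ((m : ℝ) ^ s) ∧ ((m : ℝ) ^ s)⁻¹ ≤ 1 := by
    intro m hm
    have hm1 : (1 : ℝ) ≤ (m : ℝ) := by
      have := (Finset.mem_Icc.mp hm).1; exact_mod_cast this
    have h2 : (1 : ℝ) ≤ (m : ℝ) ^ s := Real.one_le_rpow hm1 hs0
    exact ⟨lt_of_lt_of_le one_pos h2, inv_le_one_of_one_le₀ h2⟩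
  have hden : ∀ m ∈ Finset.Icc 1 n, 1 - ((m : ℝ) ^ s)⁻¹ * t m * z ≠ 0 := by
    intro m hm
    have ha := ha_mem m hm
    have habs : |((m : ℝ) ^ s)⁻¹ * t m * z| < 1 := by
      rw [abs_mul, abs_mul]
      have h1 : |((m : ℝ) ^ s)⁻¹| ≤ 1 := by
        rw [abs_of_nonneg (inv_nonneg.mpr (le_of_lt ha.1))]; exact ha.2
      have h2 : |t m| ≤ T := ht m hm
      have hmn : (1 : ℝ) ≤ (n : ℝ) := by exact_mod_cast hn
      calc |((m : ℝ) ^ s)⁻¹| * |t m| * |z| ≤ 1 * T * |z| := by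
            apply mul_le_mul_of_nonneg_right _ (abs_nonneg z)
            exact mul_le_mul h1 h2 (abs_nonneg _) zero_le_one
        _ = T * |z| := by ring
        _ ≤ (n : ℝ) * T * |z| := by
            apply mul_le_mul_of_nonneg_right _ (abs_nonneg z)
            nlinarith
        _ < 1 := lt_trans hr (by norm_num)
    intro hcon
    rw [sub_eq_zero] at hcon
    rw [← hcon] at habs
    simp at habs
  -- main induction: for every m ≤ n the generating identity holds
  suffices H : ∀ m : ℕ, m ≤ n →
      HasSum (fun k : ℕ => zetaTrunc m k s t * z ^ k)
        (∏ m' ∈ Finset.Icc 1 m,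
          (1 + ((m' : ℝ) ^ s)⁻¹ * z / (1 - ((m' : ℝ) ^ s)⁻¹ * t m' * z))) by
    exact H n le_rfl
  intro m hm
  induction m with
  | zero =>
      have : (fun k : ℕ => zetaTrunc 0 k s t * z ^ k) =
          fun k : ℕ => if k = 0 then (1 : ℝ) else 0 := by
        funext k
        by_cases hk : k = 0
        · subst hk; simp [zetaTrunc_zero_k]
        · simp [zetaTrunc_zero_n k s t hk, hk]
      rw [this]
      simpa using hasSum_ite_eq (0 : ℕ) (1 : ℝ)
  | succ m ih =>
      have hm' : m ≤ n := le_trans (Nat.le_succ m) hm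
      have IH := ih hm'
      set a : ℝ := (((m + 1 : ℕ) : ℝ) ^ s)⁻¹ with hadef
      set τ : ℝ := t (m + 1) with hτdef
      set Z : ℝ := ∏ m' ∈ Finset.Icc 1 m,
        (1 + ((m' : ℝ) ^ s)⁻¹ * z / (1 - ((m' : ℝ) ^ s)⁻¹ * t m' * z)) with hZdef
      have hm1mem : (m + 1) ∈ Finset.Icc 1 n := Finset.mem_Icc.mpr ⟨Nat.succ_pos m, hm⟩
      -- summability of the `zetaE` series
      set e : ℕ → ℝ := fun k => zetaE (m+1) k s t * z ^ k with hedef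
      have hbound : ∀ k, |e k| ≤ ((n : ℝ) * T * |z|) ^ k := by
        intro k
        rw [hedef]
        simp only
        rw [abs_mul, abs_pow]
        calc |zetaE (m+1) k s t| * |z| ^ k ≤ ((n : ℝ) * T) ^ k * |z| ^ k := by
              apply mul_le_mul_of_nonneg_right _ (by positivity)
              exact abs_zetaE_le hm k hs0 t hT1 ht
          _ = ((n : ℝ) * T * |z|) ^ k := (mul_pow _ _ _).symm
      have hesummable : Summable e := by
        rw [← summable_abs_iff]
        apply Summable.of_nonneg_of_le (fun k => abs_nonneg _) hbound
        exact summable_geometric_of_lt_one hrnn (lt_trans hr (by norm_num))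
      set E : ℝ := ∑' k, e k with hEdef
      have hE : HasSum e E := hesummable.hasSum
      have he0 : e 0 = 0 := by simp [hedef, zetaE_zero]
      -- shifted series
      have hshift : HasSum (fun k => e (k + 1)) E := by
        refine (hasSum_nat_add_iff 1).mpr ?_
        simpa [he0] using hE
      -- recurrence for the shifted series
      have herec : ∀ k, e (k + 1) = a * z * (τ * e k + zetaTrunc m k s t * z ^ k) := by
        intro k
        rw [hedef]
        simp only
        rw [zetaE_peel m k s t]
        rw [pow_succ]
        ring
      have hsum2 : HasSum (fun k => a * z * (τ * e k + zetaTrunc m k s t * z ^ k))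
          (a * z * (τ * E + Z)) := ((hE.mul_left τ).add IH).mul_left (a * z)
      have hEeq : E = a * z * (τ * E + Z) := by
        refine hshift.unique ?_
        have hfe : (fun k => e (k + 1)) =
            fun k => a * z * (τ * e k + zetaTrunc m k s t * z ^ k) := funext herec
        rw [hfe]
        exact hsum2
      have hdne : 1 - a * τ * z ≠ 0 := hden (m + 1) hm1mem
      have hEval : E = a * z * Z / (1 - a * τ * z) := by
        rw [eq_div_iff hdne]
        linear_combination hEeq
      -- assemble
      have hsplit : (fun k : ℕ => zetaTrunc (m+1) k s t * z ^ k) =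
          fun k : ℕ => zetaTrunc m k s t * z ^ k + e k := by
        funext k
        rw [zetaTrunc_split m k s t, hedef]
        ring
      rw [hsplit]
      have hfinal : HasSum (fun k : ℕ => zetaTrunc m k s t * z ^ k + e k) (Z + E) :=
        IH.add hE
      have hprod : (∏ m' ∈ Finset.Icc 1 (m+1),
          (1 + ((m' : ℝ) ^ s)⁻¹ * z / (1 - ((m' : ℝ) ^ s)⁻¹ * t m' * z))) =
          Z * (1 + a * z / (1 - a * τ * z)) := by
        rw [Finset.prod_Icc_succ_top (Nat.le_add_left 1 m)]
      rw [hprod]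
      have : Z + E = Z * (1 + a * z / (1 - a * τ * z)) := by
        rw [hEval]
        field_simp
      rw [← this]
      exact hfinal
end

section
/- For real $t \in [0,1]$, integer $s \ge 2$, and $k \ge 0$, the interpolated values $\zeta^t(\{s\}_k) = \sum_{\ell_1 \ge \cdots \ge \ell_k \ge 1} t^{\sigma(\vec\ell)} \prod_j \ell_j^{-s}$ (with $\sigma(\vec\ell)$ the number of indices $r$ with $\ell_r = \ell_{r+1}$) satisfy the convolution $\zeta^t(\{s\}_k) = \sum_{\ell=0}^k t^\ell (1-t)^{k-\ell} \zeta^\star(\{s\}_\ell) \zeta(\{s\}_{k-\ell})$, where $\zeta^\star(\{s\}_\ell) = \sum_{m_1 \ge \cdots \ge m_\ell \ge 1} \prod m_j^{-s}$ and $\zeta(\{s\}_r) = \sum_{m_1 > \cdots > m_r \ge 1} \prod m_j^{-s}$, with the $\ell = 0$ and $r = 0$ values equal to $1$. -/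
/-- Number of consecutive equalities `σ(ℓ)` of a tuple. -/
def sigmaCount {k : ℕ} (f : Fin k → ℕ) : ℕ :=
  ∑ r ∈ Finset.range k,
    if h : r + 1 < k then
      (if f ⟨r, Nat.lt_of_succ_lt h⟩ = f ⟨r + 1, h⟩ then 1 else 0)
    else 0

/-- Interpolated value `ζ^t({s}_k)`. -/
noncomputable def zetaInterp (s k : ℕ) (t : ℝ) : ℝ :=
  ∑' f : Fin k → ℕ,
    if (∀ j, 1 ≤ f j) ∧ (∀ i j : Fin k, i ≤ j → f j ≤ f i) then
      t ^ sigmaCount f * ∏ j : Fin k, ((f j : ℝ) ^ s)⁻¹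
    else 0

/-- Star value `ζ^⋆({s}_ℓ)`. -/
noncomputable def zetaStarVal (s ℓ : ℕ) : ℝ :=
  ∑' f : Fin ℓ → ℕ,
    if (∀ j, 1 ≤ f j) ∧ (∀ i j : Fin ℓ, i ≤ j → f j ≤ f i) then
      ∏ j : Fin ℓ, ((f j : ℝ) ^ s)⁻¹
    else 0

/-- MZV `ζ({s}_r)`. -/
noncomputable def zetaVal (s r : ℕ) : ℝ :=
  ∑' f : Fin r → ℕ,
    if (∀ j, 1 ≤ f j) ∧ (∀ i j : Fin r, i < j → f j < f i) then
      ∏ j : Fin r, ((f j : ℝ) ^ s)⁻¹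
    else 0

open Finset Fintype Filter Topology

namespace ZIC

/-! ### The summand and its behaviour under `Fin.cons` -/

/-- The summand of `zetaInterp`. -/
noncomputable def T (s : ℕ) (t : ℝ) (k : ℕ) (f : Fin k → ℕ) : ℝ :=
  if (∀ j, 1 ≤ f j) ∧ (∀ i j : Fin k, i ≤ j → f j ≤ f i) then
    t ^ sigmaCount f * ∏ j : Fin k, ((f j : ℝ) ^ s)⁻¹
  else 0

lemma zetaInterp_eq_tsum_T (s k : ℕ) (t : ℝ) : zetaInterp s k t = ∑' f, T s t k f := rfl

lemma sigmaCount_cons (k a : ℕ) (g : Fin k → ℕ) :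
    sigmaCount (Fin.cons a g : Fin (k+1) → ℕ) =
      sigmaCount g + (if h : 0 < k then (if a = g ⟨0, h⟩ then 1 else 0) else 0) := by
  unfold sigmaCount
  rw [Finset.sum_range_succ']
  congr 1
  · apply Finset.sum_congr rfl
    intro r hr
    have hr' : r < k := Finset.mem_range.mp hr
    by_cases h : r + 1 < k
    · rw [dif_pos (show r + 1 + 1 < k + 1 by omega), dif_pos h]
      rfl
    · rw [dif_neg (show ¬ (r + 1 + 1 < k + 1) by omega), dif_neg h]
  · by_cases h : 0 < k
    · rw [dif_pos (show 0 + 1 < k + 1 by omega), dif_pos h]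
      rfl
    · rw [dif_neg (show ¬ (0 + 1 < k + 1) by omega), dif_neg h]

lemma cond_cons (k a : ℕ) (g : Fin k → ℕ) :
    ((∀ j : Fin (k+1), 1 ≤ (Fin.cons a g : Fin (k+1) → ℕ) j) ∧
      (∀ i j : Fin (k+1), i ≤ j →
        (Fin.cons a g : Fin (k+1) → ℕ) j ≤ (Fin.cons a g : Fin (k+1) → ℕ) i))
    ↔ (1 ≤ a ∧ (∀ j, g j ≤ a)) ∧
      ((∀ j, 1 ≤ g j) ∧ (∀ i j : Fin k, i ≤ j → g j ≤ g i)) := by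
  constructor
  · rintro ⟨h1, h2⟩
    refine ⟨⟨by simpa using h1 0, fun j => ?_⟩, ⟨fun j => by simpa using h1 j.succ,
      fun i j hij => ?_⟩⟩
    · simpa using h2 0 j.succ (Fin.zero_le _)
    · have := h2 i.succ j.succ (by simpa [Fin.succ_le_succ_iff] using hij)
      simpa using this
  · rintro ⟨⟨ha, hga⟩, h1, h2⟩
    constructor
    · intro j
      rcases Fin.eq_zero_or_eq_succ j with rfl | ⟨j', rfl⟩
      · simpa using ha
      · simpa using h1 j'
    · intro i j hij
      rcases Fin.eq_zero_or_eq_succ i with rfl | ⟨i', rfl⟩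
      · rcases Fin.eq_zero_or_eq_succ j with rfl | ⟨j', rfl⟩
        · exact le_rfl
        · simpa using hga j'
      · rcases Fin.eq_zero_or_eq_succ j with rfl | ⟨j', rfl⟩
        · exact absurd (Fin.le_zero_iff.mp hij) (Fin.succ_ne_zero i')
        · have : i' ≤ j' := by simpa [Fin.succ_le_succ_iff] using hij
          simpa using h2 i' j' this

lemma T_cons (s : ℕ) (t : ℝ) (k a : ℕ) (g : Fin k → ℕ) :
    T s t (k+1) (Fin.cons a g)
      = if 1 ≤ a ∧ (∀ j, g j ≤ a) then
          ((a : ℝ) ^ s)⁻¹ *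
            ((t ^ (if h : 0 < k then (if a = g ⟨0, h⟩ then 1 else 0) else 0)) * T s t k g)
        else 0 := by
  unfold T
  by_cases hc : (∀ j, 1 ≤ g j) ∧ (∀ i j : Fin k, i ≤ j → g j ≤ g i)
  · by_cases hb : 1 ≤ a ∧ (∀ j, g j ≤ a)
    · rw [if_pos ((cond_cons k a g).mpr ⟨hb, hc⟩), if_pos hb, if_pos hc,
        sigmaCount_cons, pow_add, Fin.prod_univ_succ]
      simp only [Fin.cons_zero, Fin.cons_succ]
      ring
    · rw [if_neg (fun hcc => hb ((cond_cons k a g).mp hcc).1), if_neg hb]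
  · rw [if_neg (fun hcc => hc ((cond_cons k a g).mp hcc).2), if_neg hc]
    simp

/-! ### Truncated sums and their recursion -/

lemma sum_piFinset_cons (k : ℕ) (u : Finset ℕ) (g : (Fin (k+1) → ℕ) → ℝ) :
    ∑ f ∈ piFinset (fun _ : Fin (k+1) => u), g f
      = ∑ a ∈ u, ∑ f ∈ piFinset (fun _ : Fin k => u), g (Fin.cons a f) := by
  have h := Finset.filter_piFinset_eq_map_consEquiv (fun _ : Fin (k+1) => u)
    (fun _ => True)
  simp only [Finset.filter_true] at h
  rw [h, Finset.sum_map, Finset.sum_product]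
  rfl

/-- Truncated sum: all entries at most `N`. -/
noncomputable def S (s : ℕ) (t : ℝ) (N k : ℕ) : ℝ :=
  ∑ f ∈ piFinset (fun _ : Fin k => range (N+1)), T s t k f

lemma S_zero_right (s : ℕ) (t : ℝ) (N : ℕ) : S s t N 0 = 1 := by
  unfold S T
  rw [Fintype.piFinset_of_isEmpty]
  rw [Finset.sum_eq_single (fun i : Fin 0 => i.elim0)]
  · rw [if_pos ⟨fun j => j.elim0, fun i _ _ => i.elim0⟩]
    simp [sigmaCount]
  · intro b _ hb
    exact absurd (funext fun i => i.elim0) hb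
  · intro h
    exact absurd (Finset.mem_univ _) h

lemma S_zero_left (s : ℕ) (t : ℝ) (k : ℕ) : S s t 0 (k+1) = 0 := by
  unfold S
  have : piFinset (fun _ : Fin (k+1) => range (0+1)) = {fun _ => 0} := by
    rw [show range (0+1) = ({0} : Finset ℕ) from rfl]
    exact Fintype.piFinset_singleton (fun _ => 0)
  rw [this, Finset.sum_singleton]
  unfold T
  rw [if_neg]
  rintro ⟨h1, -⟩
  exact absurd (h1 0) (by norm_num)

lemma T_eq_zero_of_not_cond (s : ℕ) (t : ℝ) (k : ℕ) (f : Fin k → ℕ)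
    (h : ¬ ((∀ j, 1 ≤ f j) ∧ (∀ i j : Fin k, i ≤ j → f j ≤ f i))) : T s t k f = 0 := by
  unfold T; exact if_neg h

lemma t_pow_e (s : ℕ) (t : ℝ) (N k : ℕ) (g : Fin k → ℕ)
    (hg : ∀ j, g j ≤ N + 1) :
    (t ^ (if h : 0 < k then (if N + 1 = g ⟨0, h⟩ then 1 else 0) else 0)) * T s t k g
      = t * T s t k g + (1 - t) * (if (∀ j, g j ≤ N) then T s t k g else 0) := by
  by_cases hT : T s t k g = 0
  · simp [hT]
  have hcond : (∀ j, 1 ≤ g j) ∧ (∀ i j : Fin k, i ≤ j → g j ≤ g i) := by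
    by_contra hc
    exact hT (T_eq_zero_of_not_cond s t k g hc)
  by_cases h : 0 < k
  · by_cases heq : N + 1 = g ⟨0, h⟩
    · rw [dif_pos h, if_pos heq, if_neg]
      · ring
      · intro hb
        have := hb ⟨0, h⟩
        omega
    · rw [dif_pos h, if_neg heq, if_pos]
      · ring
      · intro j
        have h1 : g j ≤ g ⟨0, h⟩ := hcond.2 ⟨0, h⟩ j (by simp [Fin.le_def])
        have h2 : g ⟨0, h⟩ ≤ N + 1 := hg ⟨0, h⟩
        have h3 : g ⟨0, h⟩ ≠ N + 1 := fun hh => heq hh.symm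
        omega
  · rw [dif_neg h, if_pos]
    · ring
    · intro j
      exact absurd j.pos h

lemma S_succ (s : ℕ) (t : ℝ) (N k : ℕ) :
    S s t (N+1) (k+1) = S s t N (k+1)
      + (((N+1 : ℕ) : ℝ) ^ s)⁻¹ * (t * S s t (N+1) k + (1 - t) * S s t N k) := by
  have hsub : piFinset (fun _ : Fin k => range (N+1)) ⊆ piFinset (fun _ : Fin k => range (N+2)) :=
    Fintype.piFinset_subset _ _ (fun _ => Finset.range_subset_range.mpr (by omega))
  have step1 : ∀ g ∈ piFinset (fun _ : Fin k => range (N+2)),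
      T s t (k+1) (Fin.cons (N+1) g)
        = (((N+1 : ℕ) : ℝ) ^ s)⁻¹ *
            (t * T s t k g + (1 - t) * (if (∀ j, g j ≤ N) then T s t k g else 0)) := by
    intro g hg
    have hgle : ∀ j, g j ≤ N + 1 := by
      intro j
      have := Fintype.mem_piFinset.mp hg j
      simpa [Nat.lt_succ_iff] using this
    rw [T_cons, if_pos ⟨by omega, hgle⟩, t_pow_e s t N k g hgle]
  have hB : ∑ g ∈ piFinset (fun _ : Fin k => range (N+2)),
      (if (∀ j, g j ≤ N) then T s t k g else 0) = S s t N k := by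
    rw [← Finset.sum_subset hsub (fun g _ hg' => ?_)]
    · unfold S
      apply Finset.sum_congr rfl
      intro g hg
      have hp : ∀ j, g j ≤ N := fun j => by
        simpa [Nat.lt_succ_iff] using Fintype.mem_piFinset.mp hg j
      rw [if_pos hp]
    · rw [if_neg]
      intro hb
      apply hg'
      rw [Fintype.mem_piFinset]
      intro j
      rw [Finset.mem_range]
      exact lt_of_le_of_lt (hb j) (by omega)
  have hA : ∑ g ∈ piFinset (fun _ : Fin k => range (N+2)), T s t k g = S s t (N+1) k := rfl
  calc S s t (N+1) (k+1)
      = ∑ a ∈ range (N+2), ∑ g ∈ piFinset (fun _ : Fin k => range (N+2)),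
          T s t (k+1) (Fin.cons a g) := by
        unfold S
        exact sum_piFinset_cons k (range (N+2)) _
    _ = (∑ a ∈ range (N+1), ∑ g ∈ piFinset (fun _ : Fin k => range (N+2)),
          T s t (k+1) (Fin.cons a g))
        + ∑ g ∈ piFinset (fun _ : Fin k => range (N+2)),
            T s t (k+1) (Fin.cons (N+1) g) := Finset.sum_range_succ _ _
    _ = (∑ a ∈ range (N+1), ∑ g ∈ piFinset (fun _ : Fin k => range (N+1)),
          T s t (k+1) (Fin.cons a g))
        + ∑ g ∈ piFinset (fun _ : Fin k => range (N+2)),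
            T s t (k+1) (Fin.cons (N+1) g) := by
        congr 1
        apply Finset.sum_congr rfl
        intro a ha
        have ha' : a ≤ N := by simpa [Nat.lt_succ_iff] using ha
        refine (Finset.sum_subset hsub (fun g _ hg' => ?_)).symm
        rw [T_cons, if_neg]
        rintro ⟨-, hb⟩
        apply hg'
        rw [Fintype.mem_piFinset]
        intro j
        rw [Finset.mem_range]
        have := hb j
        omega
    _ = S s t N (k+1)
        + ∑ g ∈ piFinset (fun _ : Fin k => range (N+2)),
            T s t (k+1) (Fin.cons (N+1) g) := by
        congr 1
        unfold S
        exact (sum_piFinset_cons k (range (N+1)) _).symm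
    _ = S s t N (k+1)
        + (((N+1 : ℕ) : ℝ) ^ s)⁻¹ * (t * S s t (N+1) k + (1 - t) * S s t N k) := by
        rw [Finset.sum_congr rfl step1, ← Finset.mul_sum, Finset.sum_add_distrib,
          ← Finset.mul_sum, ← Finset.mul_sum, hB, hA]

/-! ### The convolution identity for truncated sums -/

lemma conv_step (u t : ℝ) (B B' C C' : ℕ → ℝ) (hB0 : B' 0 = B 0)
    (hB : ∀ ℓ, B' (ℓ+1) = B (ℓ+1) + u * B' ℓ) (hC0 : C' 0 = C 0)
    (hC : ∀ r, C' (r+1) = C (r+1) + u * C r) (k : ℕ) :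
    ∑ ℓ ∈ range (k+2), t^ℓ * (1-t)^(k+1-ℓ) * B' ℓ * C' (k+1-ℓ)
      = ∑ ℓ ∈ range (k+2), t^ℓ * (1-t)^(k+1-ℓ) * B ℓ * C (k+1-ℓ)
        + u * ((1-t) * ∑ ℓ ∈ range (k+1), t^ℓ * (1-t)^(k-ℓ) * B ℓ * C (k-ℓ)
               + t * ∑ ℓ ∈ range (k+1), t^ℓ * (1-t)^(k-ℓ) * B' ℓ * C' (k-ℓ)) := by
  have X1 : ∑ ℓ ∈ range (k+2), t^ℓ * (1-t)^(k+1-ℓ) * B' ℓ * C' (k+1-ℓ)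
      = ∑ ℓ ∈ range (k+2), t^ℓ * (1-t)^(k+1-ℓ) * B ℓ * C' (k+1-ℓ)
        + u * t * ∑ ℓ ∈ range (k+1), t^ℓ * (1-t)^(k-ℓ) * B' ℓ * C' (k-ℓ) := by
    rw [Finset.sum_range_succ',
      Finset.sum_range_succ' (fun ℓ => t^ℓ * (1-t)^(k+1-ℓ) * B ℓ * C' (k+1-ℓ))]
    have e1 : ∀ ℓ ∈ range (k+1),
        t^(ℓ+1) * (1-t)^(k+1-(ℓ+1)) * B' (ℓ+1) * C' (k+1-(ℓ+1))
          = t^(ℓ+1) * (1-t)^(k+1-(ℓ+1)) * B (ℓ+1) * C' (k+1-(ℓ+1))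
            + u * t * (t^ℓ * (1-t)^(k-ℓ) * B' ℓ * C' (k-ℓ)) := by
      intro ℓ hℓ
      have h1 : k + 1 - (ℓ+1) = k - ℓ := by omega
      rw [h1, hB ℓ]
      ring
    rw [Finset.sum_congr rfl e1, Finset.sum_add_distrib, ← Finset.mul_sum, hB0]
    ring
  have X2 : ∑ ℓ ∈ range (k+2), t^ℓ * (1-t)^(k+1-ℓ) * B ℓ * C' (k+1-ℓ)
      = ∑ ℓ ∈ range (k+2), t^ℓ * (1-t)^(k+1-ℓ) * B ℓ * C (k+1-ℓ)
        + u * (1-t) * ∑ ℓ ∈ range (k+1), t^ℓ * (1-t)^(k-ℓ) * B ℓ * C (k-ℓ) := by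
    rw [Finset.sum_range_succ,
      Finset.sum_range_succ (fun ℓ => t^ℓ * (1-t)^(k+1-ℓ) * B ℓ * C (k+1-ℓ))]
    have e2 : ∀ ℓ ∈ range (k+1),
        t^ℓ * (1-t)^(k+1-ℓ) * B ℓ * C' (k+1-ℓ)
          = t^ℓ * (1-t)^(k+1-ℓ) * B ℓ * C (k+1-ℓ)
            + u * (1-t) * (t^ℓ * (1-t)^(k-ℓ) * B ℓ * C (k-ℓ)) := by
      intro ℓ hℓ
      have hℓ' : ℓ ≤ k := by simpa [Nat.lt_succ_iff] using hℓ
      have h1 : k + 1 - ℓ = (k - ℓ) + 1 := by omega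
      rw [h1, hC (k - ℓ), pow_succ]
      ring
    rw [Finset.sum_congr rfl e2, Finset.sum_add_distrib, ← Finset.mul_sum]
    have h2 : k + 1 - (k+1) = 0 := by omega
    rw [h2, hC0]
    ring
  rw [X1, X2]
  ring

lemma S_succ_one (s : ℕ) (N ℓ : ℕ) :
    S s 1 (N+1) (ℓ+1) = S s 1 N (ℓ+1) + (((N+1 : ℕ) : ℝ) ^ s)⁻¹ * S s 1 (N+1) ℓ := by
  have := S_succ s 1 N ℓ
  rw [this]
  ring

lemma S_succ_zero (s : ℕ) (N r : ℕ) :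
    S s 0 (N+1) (r+1) = S s 0 N (r+1) + (((N+1 : ℕ) : ℝ) ^ s)⁻¹ * S s 0 N r := by
  have := S_succ s 0 N r
  rw [this]
  ring

lemma S_eq_R (s : ℕ) (t : ℝ) : ∀ N k, S s t N k
    = ∑ ℓ ∈ range (k+1), t^ℓ * (1-t)^(k-ℓ) * S s 1 N ℓ * S s 0 N (k-ℓ) := by
  intro N
  induction N with
  | zero =>
      intro k
      cases k with
      | zero => simp [S_zero_right]
      | succ k =>
          rw [S_zero_left]
          refine (Finset.sum_eq_zero fun ℓ hℓ => ?_).symm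
          rcases Nat.eq_zero_or_pos ℓ with rfl | hpos
          · rw [show k + 1 - 0 = k + 1 from rfl, S_zero_left]
            ring
          · obtain ⟨m, rfl⟩ := Nat.exists_eq_add_of_lt hpos
            rw [show 0 + m + 1 = m + 1 by omega, S_zero_left]
            ring
  | succ N ihN =>
      intro k
      induction k with
      | zero => simp [S_zero_right]
      | succ k ihk =>
          rw [S_succ s t N k, ihN (k+1), ihN k, ihk,
            conv_step (((N+1 : ℕ) : ℝ) ^ s)⁻¹ t (S s 1 N) (S s 1 (N+1)) (S s 0 N) (S s 0 (N+1))
              (by rw [S_zero_right, S_zero_right])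
              (fun ℓ => S_succ_one s N ℓ)
              (by rw [S_zero_right, S_zero_right])
              (fun r => S_succ_zero s N r) k]
          ring

/-! ### Summability and limits -/

noncomputable def w (s : ℕ) (n : ℕ) : ℝ := if 1 ≤ n then ((n:ℝ)^s)⁻¹ else 0

lemma w_nonneg (s n : ℕ) : 0 ≤ w s n := by
  unfold w; split_ifs <;> positivity

lemma summable_w (s : ℕ) (hs : 2 ≤ s) : Summable (w s) := by
  refine Summable.of_nonneg_of_le (fun n => w_nonneg s n) (fun n => ?_)
    ((Real.summable_nat_pow_inv (p := s)).mpr (by omega))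
  unfold w; split_ifs with h
  · exact le_rfl
  · positivity

noncomputable def W (s k : ℕ) (f : Fin k → ℕ) : ℝ := ∏ j, w s (f j)

lemma W_nonneg (s k : ℕ) (f : Fin k → ℕ) : 0 ≤ W s k f :=
  Finset.prod_nonneg fun j _ => w_nonneg s (f j)

lemma summable_W (s : ℕ) (hs : 2 ≤ s) : ∀ k, Summable (W s k) := by
  intro k
  induction k with
  | zero => exact Summable.of_finite
  | succ k ih =>
      refine (Equiv.summable_iff (Fin.consEquiv (fun _ : Fin (k+1) => ℕ))).mp ?_
      refine Summable.congr
        (((summable_w s hs).mul_of_nonneg ih (fun n => w_nonneg s n) (fun f => W_nonneg s k f))) ?_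
      rintro ⟨a, f⟩
      show w s a * W s k f = W s (k+1) (Fin.cons a f)
      unfold W
      rw [Fin.prod_univ_succ]
      simp [Fin.cons_zero, Fin.cons_succ]

lemma T_nonneg (s : ℕ) (t : ℝ) (ht : t ∈ Set.Icc (0:ℝ) 1) (k : ℕ) (f : Fin k → ℕ) :
    0 ≤ T s t k f := by
  unfold T
  split_ifs with h
  · exact mul_nonneg (pow_nonneg ht.1 _) (Finset.prod_nonneg fun j _ => by positivity)
  · exact le_rfl

lemma T_le_W (s : ℕ) (t : ℝ) (ht : t ∈ Set.Icc (0:ℝ) 1) (k : ℕ) (f : Fin k → ℕ) :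
    T s t k f ≤ W s k f := by
  unfold T W
  split_ifs with h
  · have hP : (∏ j : Fin k, ((f j : ℝ)^s)⁻¹) = ∏ j : Fin k, w s (f j) :=
      Finset.prod_congr rfl (fun j _ => by unfold w; rw [if_pos (h.1 j)])
    rw [hP]
    exact mul_le_of_le_one_left (Finset.prod_nonneg fun j _ => w_nonneg s (f j))
      (pow_le_one₀ ht.1 ht.2)
  · exact Finset.prod_nonneg fun j _ => w_nonneg s (f j)

lemma summable_T (s : ℕ) (hs : 2 ≤ s) (t : ℝ) (ht : t ∈ Set.Icc (0:ℝ) 1) (k : ℕ) :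
    Summable (T s t k) :=
  Summable.of_nonneg_of_le (T_nonneg s t ht k) (T_le_W s t ht k) (summable_W s hs k)

lemma tendsto_S (s : ℕ) (hs : 2 ≤ s) (t : ℝ) (ht : t ∈ Set.Icc (0:ℝ) 1) (k : ℕ) :
    Tendsto (fun N => S s t N k) atTop (𝓝 (zetaInterp s k t)) := by
  rw [zetaInterp_eq_tsum_T]
  have h := (summable_T s hs t ht k).hasSum
  have hmono : Monotone (fun N => piFinset (fun _ : Fin k => range (N+1))) := by
    intro M N hMN
    exact Fintype.piFinset_subset _ _ fun _ => Finset.range_subset_range.mpr (by omega)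
  have hexh : ∀ f : Fin k → ℕ, ∃ N, f ∈ piFinset (fun _ : Fin k => range (N+1)) := by
    intro f
    refine ⟨∑ j, f j, ?_⟩
    rw [Fintype.mem_piFinset]
    intro j
    rw [Finset.mem_range]
    have : f j ≤ ∑ i, f i := Finset.single_le_sum (fun i _ => Nat.zero_le _) (mem_univ j)
    omega
  exact h.comp (tendsto_atTop_finset_of_monotone hmono hexh)

/-! ### Identification of the star and strict values -/

lemma zetaStar_eq (s ℓ : ℕ) : zetaStarVal s ℓ = zetaInterp s ℓ 1 := by
  unfold zetaStarVal zetaInterp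
  apply tsum_congr
  intro f
  simp only [one_pow, one_mul]

lemma zetaVal_eq (s r : ℕ) : zetaVal s r = zetaInterp s r 0 := by
  unfold zetaVal zetaInterp
  apply tsum_congr
  intro f
  by_cases hst : (∀ j, 1 ≤ f j) ∧ (∀ i j : Fin r, i < j → f j < f i)
  · have hweak : (∀ j, 1 ≤ f j) ∧ (∀ i j : Fin r, i ≤ j → f j ≤ f i) := by
      refine ⟨hst.1, fun i j hij => ?_⟩
      rcases eq_or_lt_of_le hij with rfl | h
      · exact le_rfl
      · exact le_of_lt (hst.2 i j h)
    have hσ : sigmaCount f = 0 := by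
      unfold sigmaCount
      apply Finset.sum_eq_zero
      intro r' hr'
      by_cases h : r' + 1 < r
      · rw [dif_pos h, if_neg]
        have := hst.2 ⟨r', Nat.lt_of_succ_lt h⟩ ⟨r'+1, h⟩ (by simp [Fin.lt_def])
        omega
      · rw [dif_neg h]
    rw [if_pos hst, if_pos hweak, hσ, pow_zero, one_mul]
  · by_cases hweak : (∀ j, 1 ≤ f j) ∧ (∀ i j : Fin r, i ≤ j → f j ≤ f i)
    · have hσ : sigmaCount f ≠ 0 := by
        have hb : ¬ (∀ i j : Fin r, i < j → f j < f i) := fun hb => hst ⟨hweak.1, hb⟩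
        push_neg at hb
        obtain ⟨i, j, hij, hji⟩ := hb
        have hr1 : i.val + 1 < r := by
          have := j.isLt
          have := Fin.lt_def.mp hij
          omega
        have key : f ⟨i.val, Nat.lt_of_succ_lt hr1⟩ = f ⟨i.val + 1, hr1⟩ := by
          have e1 : f j ≤ f ⟨i.val+1, hr1⟩ :=
            hweak.2 ⟨i.val+1, hr1⟩ j (by simp [Fin.le_def]; exact Fin.lt_def.mp hij)
          have e2 : f ⟨i.val+1, hr1⟩ ≤ f ⟨i.val, Nat.lt_of_succ_lt hr1⟩ :=
            hweak.2 ⟨i.val, Nat.lt_of_succ_lt hr1⟩ ⟨i.val+1, hr1⟩ (by simp [Fin.le_def])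
          have e3 : f ⟨i.val, Nat.lt_of_succ_lt hr1⟩ = f i := congrArg f (Fin.eta i i.isLt)
          have e4 : f i ≤ f j := hji
          omega
        intro h0
        unfold sigmaCount at h0
        rw [Finset.sum_eq_zero_iff] at h0
        have := h0 i.val (Finset.mem_range.mpr (by omega))
        rw [dif_pos hr1, if_pos key] at this
        exact one_ne_zero this
      rw [if_neg hst, if_pos hweak, zero_pow hσ, zero_mul]
    · rw [if_neg hst, if_neg hweak]

end ZIC

/-- Convolution identity for interpolated multiple zeta values:
`ζ^t({s}_k) = ∑_{ℓ=0}^k t^ℓ (1-t)^{k-ℓ} ζ^⋆({s}_ℓ) ζ({s}_{k-ℓ})`. -/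
theorem zetaInterp_convolution
    (t : ℝ) (ht : t ∈ Set.Icc (0 : ℝ) 1) (s : ℕ) (hs : 2 ≤ s) (k : ℕ) :
    zetaInterp s k t
      = ∑ ℓ ∈ Finset.range (k + 1),
          t ^ ℓ * (1 - t) ^ (k - ℓ) * zetaStarVal s ℓ * zetaVal s (k - ℓ) := by
  classical
  have h01 : (1:ℝ) ∈ Set.Icc (0:ℝ) 1 := ⟨zero_le_one, le_rfl⟩
  have h00 : (0:ℝ) ∈ Set.Icc (0:ℝ) 1 := ⟨le_rfl, zero_le_one⟩
  have hLHS : Filter.Tendsto (fun N => ZIC.S s t N k) Filter.atTop (nhds (zetaInterp s k t)) :=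
    ZIC.tendsto_S s hs t ht k
  have hRHS : Filter.Tendsto
      (fun N => ∑ ℓ ∈ Finset.range (k+1),
        t^ℓ * (1-t)^(k-ℓ) * ZIC.S s 1 N ℓ * ZIC.S s 0 N (k-ℓ)) Filter.atTop
      (nhds (∑ ℓ ∈ Finset.range (k+1),
        t^ℓ * (1-t)^(k-ℓ) * zetaInterp s ℓ 1 * zetaInterp s (k-ℓ) 0)) := by
    apply tendsto_finset_sum
    intro ℓ _
    exact (tendsto_const_nhds.mul (ZIC.tendsto_S s hs 1 h01 ℓ)).mul
      (ZIC.tendsto_S s hs 0 h00 (k-ℓ))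
  have hEq : (fun N => ZIC.S s t N k)
      = fun N => ∑ ℓ ∈ Finset.range (k+1),
          t^ℓ * (1-t)^(k-ℓ) * ZIC.S s 1 N ℓ * ZIC.S s 0 N (k-ℓ) :=
    funext fun N => ZIC.S_eq_R s t N k
  rw [hEq] at hLHS
  have := tendsto_nhds_unique hLHS hRHS
  rw [this]
  exact Finset.sum_congr rfl fun ℓ _ => by rw [ZIC.zetaStar_eq, ZIC.zetaVal_eq]
end

section
/- Fix $k \ge 1$ and integers $i_1 \ge 2$, $i_2, \dots, i_k \ge 1$, and a sequence $(t_m)$ with $t_m \in [-1,1]$. Then $\zeta^{\vec{t}}(i_1,\dots,i_k) = \sum_{\mathbf{p} = (p_1,\dots,p_r) \in \mathcal{P}(k)} \sum_{\ell_1 > \cdots > \ell_r \ge 1} \prod_{j=1}^r \frac{t_{\ell_j}^{p_j - 1}}{\ell_j^{I_j}}$, where the outer sum is over compositions (ordered partitions) $\mathbf{p}$ of $k$, $P_j = p_1 + \cdots + p_j$, and $I_j = i_{P_{j-1}+1} + \cdots + i_{P_j}$. -/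
/-- The contracted exponent `I_j = i_{P_{j-1}+1} + ⋯ + i_{P_j}` of the block `j`
of the composition `l`, where the exponents are `i 0, i 1, …` (zero-indexed). -/
def blockExp (l : List ℕ) (i : ℕ → ℕ) (j : Fin l.length) : ℕ :=
  ∑ m ∈ Finset.Ico ((l.take j).sum) ((l.take (j + 1)).sum), i m

namespace MIMZV


/-- Expand a run-length encoding. -/
def expandR : List (ℕ × ℕ) → List ℕ
  | [] => []
  | (v, n) :: rs => List.replicate n v ++ expandR rs

/-- Run-length encoding. -/
def runsR : List ℕ → List (ℕ × ℕ)
  | [] => []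
  | a :: l => match runsR l with
    | [] => [(a, 1)]
    | (b, n) :: rs => if a = b then (a, n + 1) :: rs else (a, 1) :: (b, n) :: rs

theorem runsR_cons (a : ℕ) (l : List ℕ) : runsR (a :: l) = match runsR l with
    | [] => [(a, 1)]
    | (b, n) :: rs => if a = b then (a, n + 1) :: rs else (a, 1) :: (b, n) :: rs := rfl

theorem runs_head? : ∀ L : List ℕ, (runsR L).head?.map Prod.fst = L.head?
  | [] => rfl
  | a :: l => by
    rw [runsR_cons]
    rcases runsR l with _ | ⟨⟨b, n⟩, rs⟩
    · simp
    · dsimp only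
      split <;> simp

theorem expand_runs : ∀ L : List ℕ, expandR (runsR L) = L
  | [] => rfl
  | a :: l => by
    have IH := expand_runs l
    rw [runsR_cons]
    rcases h : runsR l with _ | ⟨⟨b, n⟩, rs⟩ <;> rw [h] at IH
    · simp [expandR] at IH
      simp [expandR, IH]
    · dsimp only
      split
      · next hab =>
        subst hab
        simp only [expandR, List.replicate_succ, List.cons_append] at IH ⊢
        rw [← IH]
      · simp only [expandR] at IH ⊢
        simp [IH]

theorem runs_snd_pos : ∀ L : List ℕ, ∀ p ∈ runsR L, 0 < p.2
  | [] => by simp [runsR]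
  | a :: l => by
    have IH := runs_snd_pos l
    rw [runsR_cons]
    rcases h : runsR l with _ | ⟨⟨b, n⟩, rs⟩ <;> rw [h] at IH
    · simp
    · dsimp only
      split <;> intro p hp <;> rcases List.mem_cons.1 hp with rfl | hp
      · simp
      · exact IH p (List.mem_cons_of_mem _ hp)
      · simp
      · exact IH p hp

theorem runs_fst_mem : ∀ L : List ℕ, ∀ p ∈ runsR L, p.1 ∈ L
  | [] => by simp [runsR]
  | a :: l => by
    have IH := runs_fst_mem l
    rw [runsR_cons]
    rcases h : runsR l with _ | ⟨⟨b, n⟩, rs⟩ <;> rw [h] at IH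
    · simp
    · dsimp only
      split <;> intro p hp <;> rcases List.mem_cons.1 hp with rfl | hp
      · simp
      · exact List.mem_cons_of_mem _ (IH p (List.mem_cons_of_mem _ hp))
      · simp
      · exact List.mem_cons_of_mem _ (IH p hp)

theorem runs_chain_gt : ∀ L : List ℕ, L.Chain' (fun a b => b ≤ a) →
    (runsR L).Chain' (fun p q => q.1 < p.1)
  | [] => fun _ => List.isChain_nil
  | a :: l => by
    intro hL
    obtain ⟨h1, h2⟩ := List.isChain_cons.1 hL
    have IH := runs_chain_gt l h2
    have hh := runs_head? l
    rw [runsR_cons]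
    rcases h : runsR l with _ | ⟨⟨b, n⟩, rs⟩ <;> rw [h] at IH hh
    · exact List.isChain_singleton _
    · have hba : b ≤ a := by
        simp only [List.head?_cons, Option.map_some] at hh
        exact h1 b hh.symm
      dsimp only
      split
      · next hab =>
        subst hab
        obtain ⟨h3, h4⟩ := List.isChain_cons.1 IH
        exact List.isChain_cons.2 ⟨h3, h4⟩
      · next hab =>
        exact List.isChain_cons.2 ⟨by simpa using lt_of_le_of_ne hba (Ne.symm hab), IH⟩

theorem expand_length : ∀ rs : List (ℕ × ℕ), (expandR rs).length = (rs.map Prod.snd).sum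
  | [] => rfl
  | (v, n) :: rs => by simp [expandR, expand_length rs]

theorem expand_mem : ∀ rs : List (ℕ × ℕ), ∀ x ∈ expandR rs, ∃ p ∈ rs, p.1 = x
  | [] => by simp [expandR]
  | (v, n) :: rs => by
    intro x hx
    rcases List.mem_append.1 hx with hx | hx
    · exact ⟨(v, n), by simp, (List.eq_of_mem_replicate hx).symm⟩
    · obtain ⟨p, hp, hpx⟩ := expand_mem rs x hx
      exact ⟨p, List.mem_cons_of_mem _ hp, hpx⟩

theorem expand_head? : ∀ rs : List (ℕ × ℕ), (∀ p ∈ rs, 0 < p.2) →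
    (expandR rs).head? = rs.head?.map Prod.fst
  | [], _ => rfl
  | (v, n) :: rs, h => by
    have hn : 0 < n := h (v, n) (by simp)
    obtain ⟨m, rfl⟩ := Nat.exists_eq_succ_of_ne_zero hn.ne'
    simp [expandR, List.replicate_succ]

theorem expand_chain : ∀ rs : List (ℕ × ℕ), (∀ p ∈ rs, 0 < p.2) →
    rs.Chain' (fun p q => q.1 ≤ p.1) → (expandR rs).Chain' (fun a b => b ≤ a)
  | [], _, _ => List.isChain_nil
  | (v, n) :: rs, hpos, hc => by
    obtain ⟨h1, h2⟩ := List.isChain_cons.1 hc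
    have hpos' : ∀ p ∈ rs, 0 < p.2 := fun p hp => hpos p (List.mem_cons_of_mem _ hp)
    have IH := expand_chain rs hpos' h2
    refine List.isChain_append.2 ⟨List.isChain_replicate_of_rel _ le_rfl, IH, ?_⟩
    intro x hx y hy
    have hxv : x = v := List.eq_of_mem_replicate (List.mem_of_mem_getLast? hx)
    subst hxv
    rw [expand_head? rs hpos'] at hy
    rcases hq : rs.head? with _ | q
    · simp [hq] at hy
    · rw [hq] at hy
      simp only [Option.map_some, Option.mem_def, Option.some.injEq] at hy
      subst hy
      exact h1 q hq

theorem runs_replicate_append (v : ℕ) : ∀ (n : ℕ) (L : List ℕ), (∀ a ∈ L.head?, a ≠ v) →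
    runsR (List.replicate (n + 1) v ++ L) = (v, n + 1) :: runsR L
  | 0, L, hL => by
    rw [List.replicate_succ, List.replicate_zero, List.cons_append, List.nil_append, runsR_cons]
    rcases h : runsR L with _ | ⟨⟨b, m⟩, rs⟩
    · rfl
    · have hh := runs_head? L
      rw [h] at hh
      rcases hLh : L.head? with _ | b'
      · rw [hLh] at hh; simp at hh
      · rw [hLh] at hh
        simp only [List.head?_cons, Option.map_some, Option.some.injEq] at hh
        have hbv : b ≠ v := by
          have := hL b' (by simp [hLh])
          rwa [← hh] at this
        dsimp only
        rw [if_neg (fun hvb => hbv hvb.symm)]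
  | n + 1, L, hL => by
    have IH := runs_replicate_append v n L hL
    rw [List.replicate_succ, List.cons_append, runsR_cons, IH]
    simp

theorem runs_expand : ∀ rs : List (ℕ × ℕ), (∀ p ∈ rs, 0 < p.2) →
    rs.Chain' (fun p q => p.1 ≠ q.1) → runsR (expandR rs) = rs
  | [], _, _ => rfl
  | (v, n) :: rs, hpos, hc => by
    obtain ⟨h1, h2⟩ := List.isChain_cons.1 hc
    have hpos' : ∀ p ∈ rs, 0 < p.2 := fun p hp => hpos p (List.mem_cons_of_mem _ hp)
    have hn : 0 < n := hpos (v, n) (by simp)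
    obtain ⟨m, rfl⟩ := Nat.exists_eq_succ_of_ne_zero hn.ne'
    have hhead : ∀ a ∈ (expandR rs).head?, a ≠ v := by
      intro a ha
      rw [expand_head? rs hpos'] at ha
      rcases hq : rs.head? with _ | q
      · simp [hq] at ha
      · rw [hq] at ha
        simp only [Option.map_some, Option.mem_def, Option.some.injEq] at ha
        subst ha
        exact fun h => h1 q hq h.symm
    show runsR (List.replicate (m + 1) v ++ expandR rs) = _
    rw [runs_replicate_append v m _ hhead, runs_expand rs hpos' h2]


noncomputable def wtL (t : ℕ → ℝ) : List ℕ → ℝ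
  | [] => 1
  | [_] => 1
  | a :: b :: l => (if a = b then t b else 1) * wtL t (b :: l)

noncomputable def powL (i : ℕ → ℕ) : List ℕ → ℕ → ℝ
  | [], _ => 1
  | a :: l, off => ((a : ℝ) ^ i off)⁻¹ * powL i l (off + 1)

noncomputable def rhsL (t : ℕ → ℝ) (i : ℕ → ℕ) : List (ℕ × ℕ) → ℕ → ℝ
  | [], _ => 1
  | (v, n) :: rs, off =>
      (t v ^ (n - 1) * ((v : ℝ) ^ (∑ m ∈ Finset.Ico off (off + n), i m))⁻¹) * rhsL t i rs (off + n)

theorem wtL_replicate_append (t : ℕ → ℝ) (v : ℕ) :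
    ∀ (n : ℕ) (L : List ℕ), (∀ a ∈ L.head?, a ≠ v) →
      wtL t (List.replicate (n + 1) v ++ L) = t v ^ n * wtL t L
  | 0, L, hL => by
    rw [List.replicate_succ, List.replicate_zero, List.cons_append, List.nil_append]
    rcases L with _ | ⟨b, l⟩
    · simp [wtL]
    · have hb : b ≠ v := hL b (by simp)
      rw [show wtL t (v :: b :: l) = (if v = b then t b else 1) * wtL t (b :: l) from rfl,
        if_neg (fun h => hb h.symm)]
      simp
  | n + 1, L, hL => by
    have IH := wtL_replicate_append t v n L hL
    have hcons : List.replicate (n + 1) v ++ L = v :: (List.replicate n v ++ L) := by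
      rw [List.replicate_succ, List.cons_append]
    rw [hcons] at IH
    rw [List.replicate_succ, List.cons_append, hcons]
    rw [show wtL t (v :: v :: (List.replicate n v ++ L))
        = (if v = v then t v else 1) * wtL t (v :: (List.replicate n v ++ L)) from rfl,
      if_pos rfl, IH, pow_succ]
    ring

theorem powL_replicate_append (i : ℕ → ℕ) (v : ℕ) :
    ∀ (n off : ℕ) (L : List ℕ),
      powL i (List.replicate n v ++ L) off
        = ((v : ℝ) ^ (∑ m ∈ Finset.Ico off (off + n), i m))⁻¹ * powL i L (off + n)
  | 0, off, L => by simp [powL]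
  | n + 1, off, L => by
    have IH := powL_replicate_append i v n (off + 1) L
    rw [List.replicate_succ, List.cons_append,
      show powL i (v :: (List.replicate n v ++ L)) off
        = ((v : ℝ) ^ i off)⁻¹ * powL i (List.replicate n v ++ L) (off + 1) from rfl,
      IH]
    have h1 : off + 1 + n = off + (n + 1) := by omega
    have h2 : ∑ m ∈ Finset.Ico off (off + (n + 1)), i m
        = i off + ∑ m ∈ Finset.Ico (off + 1) (off + 1 + n), i m := by
      rw [h1]
      exact Finset.sum_eq_sum_Ico_succ_bot (by omega) i
    rw [h1, h2, pow_add, mul_inv]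
    ring

theorem wtL_powL_expand (t : ℕ → ℝ) (i : ℕ → ℕ) :
    ∀ (rs : List (ℕ × ℕ)) (off : ℕ), (∀ p ∈ rs, 0 < p.2) →
      rs.Chain' (fun p q => p.1 ≠ q.1) →
      wtL t (expandR rs) * powL i (expandR rs) off = rhsL t i rs off
  | [], off, _, _ => by simp [expandR, wtL, powL, rhsL]
  | (v, n) :: rs, off, hpos, hc => by
    obtain ⟨h1, h2⟩ := List.isChain_cons.1 hc
    have hpos' : ∀ p ∈ rs, 0 < p.2 := fun p hp => hpos p (List.mem_cons_of_mem _ hp)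
    have hn : 0 < n := hpos (v, n) (by simp)
    obtain ⟨m, rfl⟩ := Nat.exists_eq_succ_of_ne_zero hn.ne'
    have hhead : ∀ a ∈ (expandR rs).head?, a ≠ v := by
      intro a ha
      rw [expand_head? rs hpos'] at ha
      rcases hq : rs.head? with _ | q
      · rw [hq] at ha; simp at ha
      · rw [hq] at ha
        simp only [Option.map_some, Option.mem_def, Option.some.injEq] at ha
        subst ha
        exact fun h => h1 q hq h.symm
    have IH := wtL_powL_expand t i rs (off + (m + 1)) hpos' h2
    show wtL t (List.replicate (m + 1) v ++ expandR rs)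
        * powL i (List.replicate (m + 1) v ++ expandR rs) off = _
    rw [wtL_replicate_append t v m _ hhead, powL_replicate_append i v (m + 1) off _]
    show _ = (t v ^ (m + 1 - 1) * ((v : ℝ) ^ (∑ x ∈ Finset.Ico off (off + (m + 1)), i x))⁻¹)
        * rhsL t i rs (off + (m + 1))
    rw [← IH]
    simp only [Nat.add_sub_cancel]
    ring


theorem ofFn_get_cast {α : Type*} (L : List α) {k : ℕ} (h : L.length = k) :
    List.ofFn (fun m : Fin k => L.get (Fin.cast h.symm m)) = L := by
  apply List.ext_get (by simp [h])
  intro n h1 h2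
  simp [List.get_ofFn]

theorem rel_of_adj {k : ℕ} (R : ℕ → ℕ → Prop) (htr : Transitive R) (f : Fin k → ℕ)
    (h : ∀ (r : ℕ) (hr : r + 1 < k), R (f ⟨r + 1, hr⟩) (f ⟨r, Nat.lt_of_succ_lt hr⟩)) :
    ∀ (n : ℕ) (hn : n < k) (a : Fin k), a.val < n → R (f ⟨n, hn⟩) (f a) := by
  intro n
  induction n with
  | zero => intro hn a ha; omega
  | succ m IH =>
    intro hn a ha
    rcases Nat.lt_or_ge a.val m with h' | h'
    · exact htr (h m hn) (IH (Nat.lt_of_succ_lt hn) a h')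
    · have haeq : a = ⟨m, Nat.lt_of_succ_lt hn⟩ := Fin.ext (show a.val = m by omega)
      rw [haeq]
      exact h m hn

theorem anti_iff_chain' {k : ℕ} (f : Fin k → ℕ) :
    (∀ a b : Fin k, a ≤ b → f b ≤ f a) ↔ (List.ofFn f).Chain' (fun a b => b ≤ a) := by
  rw [List.Chain', List.isChain_iff_getElem]
  constructor
  · intro H i hi
    simp only [List.length_ofFn] at hi
    simp only [List.getElem_ofFn]
    exact H _ _ (by simp [Fin.le_def])
  · intro H a b hab
    rcases eq_or_lt_of_le hab with rfl | hlt
    · exact le_rfl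
    · have := rel_of_adj (fun x y => x ≤ y) (fun _ _ _ h1 h2 => le_trans h1 h2) f ?_ b.val b.isLt a hlt
      · simpa using this
      · intro r hr
        have := H r (by simp only [List.length_ofFn]; omega)
        simpa [List.get_ofFn] using this

theorem strict_iff_chain' {k : ℕ} (g : Fin k → ℕ) :
    (∀ a b : Fin k, a < b → g b < g a) ↔ (List.ofFn g).Chain' (fun a b => b < a) := by
  rw [List.Chain', List.isChain_iff_getElem]
  constructor
  · intro H i hi
    simp only [List.length_ofFn] at hi
    simp only [List.getElem_ofFn]
    exact H _ _ (by simp [Fin.lt_def])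
  · intro H a b hab
    have := rel_of_adj (fun x y => x < y) (fun _ _ _ h1 h2 => lt_trans h1 h2) g ?_ b.val b.isLt a hab
    · simpa using this
    · intro r hr
      have := H r (by simp only [List.length_ofFn]; omega)
      simpa [List.get_ofFn] using this

theorem wt_eq_wtL (t : ℕ → ℝ) : ∀ {k : ℕ} (f : Fin k → ℕ), wt t f = wtL t (List.ofFn f)
  | 0, f => by simp [wt, wtL, List.ofFn_zero]
  | 1, f => by
    rw [List.ofFn_succ, List.ofFn_zero]
    simp [wt, wtL]
  | n + 2, f => by
    have IH := wt_eq_wtL t (fun i : Fin (n + 1) => f i.succ)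
    rw [List.ofFn_succ]
    rw [show List.ofFn (fun i : Fin (n + 1) => f i.succ)
        = f (Fin.succ 0) :: List.ofFn (fun i : Fin n => f i.succ.succ) from by
      rw [List.ofFn_succ]]
    rw [show wtL t (f 0 :: f (Fin.succ 0) :: List.ofFn fun i : Fin n => f i.succ.succ)
        = (if f 0 = f (Fin.succ 0) then t (f (Fin.succ 0)) else 1)
          * wtL t (f (Fin.succ 0) :: List.ofFn fun i : Fin n => f i.succ.succ) from rfl]
    rw [show (f (Fin.succ 0) :: List.ofFn fun i : Fin n => f i.succ.succ)
        = List.ofFn (fun i : Fin (n + 1) => f i.succ) from by rw [List.ofFn_succ]]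
    rw [← IH]
    unfold wt
    rw [Finset.prod_range_succ', mul_comm]
    congr 1
    · apply Finset.prod_congr rfl
      intro r hr
      simp only [Finset.mem_range] at hr
      dsimp only
      by_cases h : r + 1 < n + 1
      · rw [dif_pos (by omega : r + 1 + 1 < n + 2), dif_pos h]
        have e1 : (⟨r, Nat.lt_of_succ_lt h⟩ : Fin (n + 1)).succ
            = ⟨r + 1, Nat.lt_of_succ_lt (by omega : r + 1 + 1 < n + 2)⟩ := rfl
        have e2 : (⟨r + 1, h⟩ : Fin (n + 1)).succ = ⟨r + 1 + 1, by omega⟩ := rfl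
        simp only [e1, e2]
      · rw [dif_neg (by omega), dif_neg h]

theorem pow_eq_powL (i : ℕ → ℕ) : ∀ {k : ℕ} (f : Fin k → ℕ) (off : ℕ),
    (∏ j : Fin k, ((f j : ℝ) ^ i (off + (j : ℕ)))⁻¹) = powL i (List.ofFn f) off
  | 0, f, off => by simp [powL, List.ofFn_zero]
  | n + 1, f, off => by
    have IH := pow_eq_powL i (fun j : Fin n => f j.succ) (off + 1)
    rw [List.ofFn_succ]
    rw [show powL i (f 0 :: List.ofFn fun j : Fin n => f j.succ) off
        = ((f 0 : ℝ) ^ i off)⁻¹ * powL i (List.ofFn fun j : Fin n => f j.succ) (off + 1) from rfl,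
      ← IH, Fin.prod_univ_succ]
    have hh : (∏ j : Fin n, ((f j.succ : ℝ) ^ i (off + (j.succ : ℕ)))⁻¹)
        = ∏ j : Fin n, ((f j.succ : ℝ) ^ i (off + 1 + (j : ℕ)))⁻¹ :=
      Finset.prod_congr rfl (fun j _ => by
        rw [Fin.val_succ, show off + ((j : ℕ) + 1) = off + 1 + (j : ℕ) from by omega])
    rw [hh]
    norm_num

theorem rhsL_eq_prod (t : ℕ → ℝ) (i : ℕ → ℕ) :
    ∀ (rs : List (ℕ × ℕ)) (off : ℕ),
      rhsL t i rs off = ∏ j : Fin rs.length,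
        t (rs.get j).1 ^ ((rs.get j).2 - 1) *
          (((rs.get j).1 : ℝ) ^ (∑ m ∈ Finset.Ico (off + ((rs.map Prod.snd).take (j : ℕ)).sum)
            (off + ((rs.map Prod.snd).take ((j : ℕ) + 1)).sum), i m))⁻¹
  | [], off => by simp [rhsL]
  | (v, n) :: rs, off => by
    have IH := rhsL_eq_prod t i rs (off + n)
    show rhsL t i ((v, n) :: rs) off = ∏ j : Fin (rs.length + 1),
        t (((v, n) :: rs).get j).1 ^ ((((v, n) :: rs).get j).2 - 1) *
          (((((v, n) :: rs).get j).1 : ℝ) ^ (∑ m ∈ Finset.Ico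
            (off + ((((v, n) :: rs).map Prod.snd).take (j : ℕ)).sum)
            (off + ((((v, n) :: rs).map Prod.snd).take ((j : ℕ) + 1)).sum), i m))⁻¹
    rw [show rhsL t i ((v, n) :: rs) off
        = (t v ^ (n - 1) * ((v : ℝ) ^ (∑ m ∈ Finset.Ico off (off + n), i m))⁻¹)
          * rhsL t i rs (off + n) from rfl, IH, Fin.prod_univ_succ]
    congr 1 <;> simp <;> simp only [Nat.add_assoc]


theorem summable_pi_rpow (p : ℝ) (hp : p < -1) :
    ∀ k : ℕ, Summable (fun f : Fin k → ℕ => ∏ j, ((f j : ℕ) : ℝ) ^ p)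
  | 0 => by
    simp only [Finset.univ_eq_empty, Finset.prod_empty]
    exact Summable.of_finite
  | k + 1 => by
    have IH := summable_pi_rpow p hp k
    have hmul := Summable.mul_of_nonneg (Real.summable_nat_rpow.2 hp) IH
      (fun n => Real.rpow_nonneg (Nat.cast_nonneg n) p)
      (fun g => Finset.prod_nonneg fun j _ => Real.rpow_nonneg (Nat.cast_nonneg _) p)
    refine (Equiv.summable_iff (Fin.consEquiv (fun _ : Fin (k + 1) => ℕ))).mp ?_
    refine hmul.congr fun x => ?_
    obtain ⟨a, g⟩ := x
    show (a : ℝ) ^ p * ∏ j, ((g j : ℕ) : ℝ) ^ p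
      = ∏ j, ((Fin.consEquiv (fun _ : Fin (k + 1) => ℕ) (a, g) j : ℕ) : ℝ) ^ p
    rw [Fin.prod_univ_succ]
    simp [Fin.consEquiv]

/-- The domination bound: for `f` positive and antitone with exponents `i 0 ≥ 2`, `i m ≥ 1`,
`∏ (f j ^ i j)⁻¹ ≤ ∏ (f j) ^ (-(1 + 1/k))`. -/
theorem pow_prod_le {k : ℕ} (hk : 1 ≤ k) (i : ℕ → ℕ) (hi0 : 2 ≤ i 0) (hi : ∀ m < k, 1 ≤ i m)
    (f : Fin k → ℕ) (hf1 : ∀ j, 1 ≤ f j) (hf2 : ∀ a b : Fin k, a ≤ b → f b ≤ f a) :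
    (∏ j : Fin k, ((f j : ℝ) ^ i (j : ℕ))⁻¹)
      ≤ ∏ j : Fin k, ((f j : ℕ) : ℝ) ^ (-(1 + (k : ℝ)⁻¹)) := by
  have hx1 : ∀ j, (1 : ℝ) ≤ (f j : ℝ) := fun j => by exact_mod_cast hf1 j
  have hx0 : ∀ j, (0 : ℝ) < (f j : ℝ) := fun j => lt_of_lt_of_le one_pos (hx1 j)
  set z : Fin k := ⟨0, hk⟩ with hz
  have step1 : (∏ j : Fin k, ((f j : ℝ) ^ i (j : ℕ))⁻¹)
      ≤ ∏ j : Fin k, (f j : ℝ) ^ (if j = z then (-2 : ℝ) else -1) := by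
    apply Finset.prod_le_prod (fun j _ => by positivity)
    intro j _
    rw [show ((f j : ℝ) ^ i (j : ℕ))⁻¹ = (f j : ℝ) ^ (-(i (j : ℕ) : ℝ)) from by
      rw [Real.rpow_neg (hx0 j).le, Real.rpow_natCast]]
    apply Real.rpow_le_rpow_of_exponent_le (hx1 j)
    split_ifs with hj
    · have : (j : ℕ) = 0 := by rw [hj]
      rw [this]
      have h2 : (2 : ℝ) ≤ (i 0 : ℝ) := by exact_mod_cast hi0
      linarith
    · have h1 : (1 : ℝ) ≤ (i (j : ℕ) : ℝ) := by exact_mod_cast hi (j : ℕ) j.isLt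
      linarith
  have step2 : (∏ j : Fin k, (f j : ℝ) ^ (if j = z then (-2 : ℝ) else -1))
      = (f z : ℝ) ^ (-1 : ℝ) * ∏ j : Fin k, (f j : ℝ) ^ (-1 : ℝ) := by
    calc ∏ j : Fin k, (f j : ℝ) ^ (if j = z then (-2 : ℝ) else -1)
        = (f z : ℝ) ^ (-2 : ℝ) * ∏ j ∈ Finset.univ.erase z, (f j : ℝ) ^ (-1 : ℝ) := by
          rw [← Finset.mul_prod_erase _ _ (Finset.mem_univ z), if_pos rfl]
          congr 1
          exact Finset.prod_congr rfl fun j hj => by rw [if_neg (Finset.ne_of_mem_erase hj)]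
      _ = (f z : ℝ) ^ (-1 : ℝ) * ((f z : ℝ) ^ (-1 : ℝ)
            * ∏ j ∈ Finset.univ.erase z, (f j : ℝ) ^ (-1 : ℝ)) := by
          rw [show (-2 : ℝ) = -1 + -1 from by norm_num, Real.rpow_add (hx0 z), mul_assoc]
      _ = (f z : ℝ) ^ (-1 : ℝ) * ∏ j : Fin k, (f j : ℝ) ^ (-1 : ℝ) := by
          congr 1
          exact Finset.mul_prod_erase _ (fun j => ((f j : ℕ) : ℝ) ^ (-1 : ℝ))
            (Finset.mem_univ z)
  have hkR : (0 : ℝ) < (k : ℝ) := by exact_mod_cast hk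
  have step3 : (f z : ℝ) ^ (-1 : ℝ) ≤ ∏ j : Fin k, (f j : ℝ) ^ (-(k : ℝ)⁻¹) := by
    have hle : ∀ j : Fin k, (f z : ℝ) ^ (-(k : ℝ)⁻¹) ≤ (f j : ℝ) ^ (-(k : ℝ)⁻¹) := by
      intro j
      apply Real.rpow_le_rpow_of_nonpos (hx0 j)
      · exact_mod_cast hf2 z j (by simp [hz, Fin.le_def])
      · simp only [neg_nonpos]
        positivity
    calc (f z : ℝ) ^ (-1 : ℝ)
        = ((f z : ℝ) ^ (-(k : ℝ)⁻¹)) ^ (k : ℕ) := by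
          rw [← Real.rpow_natCast ((f z : ℝ) ^ (-(k : ℝ)⁻¹)) k, ← Real.rpow_mul (hx0 z).le]
          congr 1
          field_simp
      _ = ∏ _j : Fin k, (f z : ℝ) ^ (-(k : ℝ)⁻¹) := by
          rw [Finset.prod_const, Finset.card_univ, Fintype.card_fin]
      _ ≤ ∏ j : Fin k, (f j : ℝ) ^ (-(k : ℝ)⁻¹) :=
          Finset.prod_le_prod (fun j _ => by positivity) (fun j _ => hle j)
  calc (∏ j : Fin k, ((f j : ℝ) ^ i (j : ℕ))⁻¹)
      ≤ ∏ j : Fin k, (f j : ℝ) ^ (if j = z then (-2 : ℝ) else -1) := step1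
    _ = (f z : ℝ) ^ (-1 : ℝ) * ∏ j : Fin k, (f j : ℝ) ^ (-1 : ℝ) := step2
    _ ≤ (∏ j : Fin k, (f j : ℝ) ^ (-(k : ℝ)⁻¹)) * ∏ j : Fin k, (f j : ℝ) ^ (-1 : ℝ) :=
        mul_le_mul_of_nonneg_right step3
          (Finset.prod_nonneg fun j _ => Real.rpow_nonneg (hx0 j).le _)
    _ = ∏ j : Fin k, ((f j : ℕ) : ℝ) ^ (-(1 + (k : ℝ)⁻¹)) := by
        rw [← Finset.prod_mul_distrib]
        apply Finset.prod_congr rfl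
        intro j _
        rw [← Real.rpow_add (hx0 j)]
        congr 1
        ring

theorem summable_A (k : ℕ) (hk : 1 ≤ k) (i : ℕ → ℕ) (hi0 : 2 ≤ i 0) (hi : ∀ m < k, 1 ≤ i m)
    (t : ℕ → ℝ) (ht : ∀ m, |t m| ≤ 1) :
    Summable (fun a : {f : Fin k → ℕ // (∀ j, 1 ≤ f j) ∧ (∀ a b : Fin k, a ≤ b → f b ≤ f a)} =>
      wt t a.1 * ∏ j : Fin k, ((a.1 j : ℝ) ^ i (j : ℕ))⁻¹) := by
  have hp : -(1 + (k : ℝ)⁻¹) < -1 := by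
    have h0 : (0 : ℝ) < (k : ℝ)⁻¹ := by
      have : (0 : ℝ) < (k : ℝ) := by exact_mod_cast hk
      positivity
    linarith
  have hM := summable_pi_rpow _ hp k
  have hMs : Summable (fun a : {f : Fin k → ℕ //
      (∀ j, 1 ≤ f j) ∧ (∀ a b : Fin k, a ≤ b → f b ≤ f a)} =>
      ∏ j, ((a.1 j : ℕ) : ℝ) ^ (-(1 + (k : ℝ)⁻¹))) :=
    hM.subtype _
  rw [← summable_abs_iff]
  apply Summable.of_nonneg_of_le (fun a => abs_nonneg _) ?_ hMs
  rintro ⟨f, hf1, hf2⟩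
  show |wt t f * ∏ j : Fin k, ((f j : ℝ) ^ i (j : ℕ))⁻¹| ≤ _
  have hprod_nonneg : 0 ≤ ∏ j : Fin k, ((f j : ℝ) ^ i (j : ℕ))⁻¹ :=
    Finset.prod_nonneg fun j _ => by positivity
  have hwt : |wt t f| ≤ 1 := by
    unfold wt
    rw [Finset.abs_prod (R := ℝ)]
    apply Finset.prod_le_one (fun r _ => abs_nonneg _)
    intro r _
    split_ifs with h1 h2
    · exact ht _
    · simp
    · simp
  rw [abs_mul, abs_of_nonneg hprod_nonneg]
  calc |wt t f| * (∏ j : Fin k, ((f j : ℝ) ^ i (j : ℕ))⁻¹)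
      ≤ 1 * (∏ j : Fin k, ((f j : ℝ) ^ i (j : ℕ))⁻¹) :=
        mul_le_mul_of_nonneg_right hwt hprod_nonneg
    _ = ∏ j : Fin k, ((f j : ℝ) ^ i (j : ℕ))⁻¹ := one_mul _
    _ ≤ _ := pow_prod_le hk i hi0 hi f hf1 hf2


abbrev CT (k : ℕ) := {l : List ℕ // l.sum = k ∧ ∀ p ∈ l, 0 < p}

abbrev BT {k : ℕ} (c : CT k) :=
  {g : Fin c.1.length → ℕ // (∀ j, 1 ≤ g j) ∧ (∀ a b : Fin c.1.length, a < b → g b < g a)}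

abbrev AT (k : ℕ) := {f : Fin k → ℕ // (∀ j, 1 ≤ f j) ∧ (∀ a b : Fin k, a ≤ b → f b ≤ f a)}

def rsOf {k : ℕ} (c : CT k) (g : Fin c.1.length → ℕ) : List (ℕ × ℕ) :=
  List.ofFn (fun j => (g j, c.1.get j))

theorem rsOf_length {k : ℕ} (c : CT k) (g : Fin c.1.length → ℕ) :
    (rsOf c g).length = c.1.length := List.length_ofFn

theorem rsOf_map_snd {k : ℕ} (c : CT k) (g : Fin c.1.length → ℕ) :
    (rsOf c g).map Prod.snd = c.1 := by
  rw [rsOf, List.map_ofFn]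
  exact List.ofFn_get c.1

theorem rsOf_snd_pos {k : ℕ} (c : CT k) (g : Fin c.1.length → ℕ) : ∀ p ∈ rsOf c g, 0 < p.2 := by
  intro p hp
  rw [rsOf, List.mem_ofFn] at hp
  obtain ⟨j, rfl⟩ := hp
  exact c.2.2 _ (c.1.get_mem _)

theorem rsOf_chain_le {k : ℕ} (c : CT k) (g : Fin c.1.length → ℕ)
    (hg : ∀ a b : Fin c.1.length, a < b → g b < g a) :
    (rsOf c g).Chain' (fun p q => q.1 ≤ p.1) := by
  rw [List.Chain', List.isChain_iff_getElem]
  intro r hr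
  simp only [rsOf, List.getElem_ofFn]
  exact le_of_lt (hg _ _ (by simp [Fin.lt_def]))

theorem rsOf_chain_ne {k : ℕ} (c : CT k) (g : Fin c.1.length → ℕ)
    (hg : ∀ a b : Fin c.1.length, a < b → g b < g a) :
    (rsOf c g).Chain' (fun p q => p.1 ≠ q.1) := by
  rw [List.Chain', List.isChain_iff_getElem]
  intro r hr
  simp only [rsOf, List.getElem_ofFn]
  exact (ne_of_lt (hg _ _ (by simp [Fin.lt_def]))).symm

theorem expand_rsOf_length {k : ℕ} (c : CT k) (g : Fin c.1.length → ℕ) :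
    (expandR (rsOf c g)).length = k := by
  rw [expand_length, rsOf_map_snd]
  exact c.2.1

def ΦF {k : ℕ} (c : CT k) (g : Fin c.1.length → ℕ) : Fin k → ℕ :=
  fun m => (expandR (rsOf c g)).get (Fin.cast (expand_rsOf_length c g).symm m)

theorem ofFn_ΦF {k : ℕ} (c : CT k) (g : Fin c.1.length → ℕ) :
    List.ofFn (ΦF c g) = expandR (rsOf c g) := by
  unfold ΦF
  exact ofFn_get_cast _ (expand_rsOf_length c g)

def toA {k : ℕ} (s : Σ c : CT k, BT c) : AT k :=
  ⟨ΦF s.1 s.2.1, by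
    intro m
    obtain ⟨p, hp, hpx⟩ := expand_mem _ _ (List.get_mem _ _)
    rw [ΦF, ← hpx]
    rw [rsOf, List.mem_ofFn] at hp
    obtain ⟨j, rfl⟩ := hp
    exact s.2.2.1 j, by
    rw [anti_iff_chain', ofFn_ΦF]
    exact expand_chain _ (rsOf_snd_pos _ _) (rsOf_chain_le _ _ s.2.2.2)⟩

theorem toA_bijective {k : ℕ} : Function.Bijective (toA (k := k)) := by
  constructor
  · rintro ⟨c1, g1, hg1⟩ ⟨c2, g2, hg2⟩ h
    have hΦ : ΦF c1 g1 = ΦF c2 g2 := congrArg Subtype.val h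
    have hexp : expandR (rsOf c1 g1) = expandR (rsOf c2 g2) := by
      rw [← ofFn_ΦF, ← ofFn_ΦF, hΦ]
    have hrs : rsOf c1 g1 = rsOf c2 g2 := by
      rw [← runs_expand (rsOf c1 g1) (rsOf_snd_pos _ _) (rsOf_chain_ne _ _ hg1.2),
        ← runs_expand (rsOf c2 g2) (rsOf_snd_pos _ _) (rsOf_chain_ne _ _ hg2.2), hexp]
    have hc : c1 = c2 := Subtype.ext (by
      rw [← rsOf_map_snd c1 g1, ← rsOf_map_snd c2 g2, hrs])
    subst hc
    have hg : g1 = g2 := by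
      funext j
      have h1 := congrArg (fun L => L[(j : ℕ)]?) hrs
      simp only [rsOf, List.getElem?_ofFn] at h1
      rw [dif_pos j.isLt, dif_pos j.isLt] at h1
      simp only [Option.some.injEq, Prod.mk.injEq, Fin.eta] at h1
      exact h1.1
    subst hg
    rfl
  · rintro ⟨f, hf1, hf2⟩
    have hchain : (List.ofFn f).Chain' (fun a b => b ≤ a) := (anti_iff_chain' f).1 hf2
    set rs := runsR (List.ofFn f) with hrsdef
    have hpos : ∀ p ∈ rs, 0 < p.2 := runs_snd_pos _
    have hsum : (rs.map Prod.snd).sum = k := by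
      rw [← expand_length, hrsdef, expand_runs, List.length_ofFn]
    have hposc : ∀ p ∈ rs.map Prod.snd, 0 < p := by
      intro p hp
      rw [List.mem_map] at hp
      obtain ⟨q, hq, rfl⟩ := hp
      exact hpos q hq
    set c : CT k := ⟨rs.map Prod.snd, hsum, hposc⟩ with hc
    set gfun : Fin c.1.length → ℕ :=
      fun j => (rs.get (Fin.cast (List.length_map _) j)).1 with hgfun
    have hofg : List.ofFn gfun = rs.map Prod.fst := by
      apply List.ext_get (by simp [hc])
      intro n h1 h2
      simp [hgfun, List.get_ofFn]
    have hg1 : ∀ j, 1 ≤ gfun j := by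
      intro j
      have hmem : gfun j ∈ List.ofFn f := runs_fst_mem _ _ (List.get_mem _ _)
      rw [List.mem_ofFn] at hmem
      obtain ⟨m, hm⟩ := hmem
      rw [← hm]
      exact hf1 m
    have hg2 : ∀ a b : Fin c.1.length, a < b → gfun b < gfun a := by
      rw [strict_iff_chain', hofg, List.Chain', List.isChain_map]
      exact runs_chain_gt _ hchain
    have hkey : rsOf c gfun = rs := by
      apply List.ext_get (by simp [rsOf, hc])
      intro n h1 h2
      simp only [rsOf, List.get_ofFn, hgfun]
      apply Prod.ext
      · rfl
      · show c.1.get _ = _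
        simp [hc]
    refine ⟨⟨c, ⟨gfun, hg1, hg2⟩⟩, Subtype.ext (funext fun m => ?_)⟩
    show ΦF c gfun m = f m
    have hexp : expandR (rsOf c gfun) = List.ofFn f := by rw [hkey, hrsdef, expand_runs]
    have hpack : (⟨expandR (rsOf c gfun), expand_rsOf_length c gfun⟩ : {L : List ℕ // L.length = k})
        = ⟨List.ofFn f, List.length_ofFn⟩ := Subtype.ext hexp
    have h2 := congrArg (fun L : {L : List ℕ // L.length = k} => L.1.get (Fin.cast L.2.symm m)) hpack
    have h3 : (List.ofFn f).get (Fin.cast (List.length_ofFn).symm m) = f m := by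
      rw [List.get_ofFn]
      exact congrArg f (Fin.ext rfl)
    exact h2.trans h3


theorem key_eq {k : ℕ} (i : ℕ → ℕ) (t : ℕ → ℝ) (c : CT k) (g : BT c) :
    (∏ j : Fin c.1.length,
        t (g.1 j) ^ (c.1.get j - 1) * ((g.1 j : ℝ) ^ blockExp c.1 i j)⁻¹)
      = wt t (ΦF c g.1) * ∏ j : Fin k, ((ΦF c g.1 j : ℝ) ^ i (j : ℕ))⁻¹ := by
  have h1 : wt t (ΦF c g.1) = wtL t (expandR (rsOf c g.1)) := by
    rw [wt_eq_wtL, ofFn_ΦF]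
  have h2 : (∏ j : Fin k, ((ΦF c g.1 j : ℝ) ^ i (j : ℕ))⁻¹)
      = powL i (expandR (rsOf c g.1)) 0 := by
    rw [← ofFn_ΦF c g.1, ← pow_eq_powL]
    exact Finset.prod_congr rfl fun j _ => by rw [zero_add]
  rw [h1, h2, wtL_powL_expand t i _ 0 (rsOf_snd_pos c g.1) (rsOf_chain_ne c g.1 g.2.2),
    rhsL_eq_prod]
  rw [← Equiv.prod_comp (finCongr (rsOf_length c g.1).symm)]
  apply Finset.prod_congr rfl
  intro j _
  have hget : (rsOf c g.1).get (finCongr (rsOf_length c g.1).symm j) = (g.1 j, c.1.get j) := by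
    simp only [rsOf, List.get_ofFn]
    congr 1 <;> exact congrArg _ (Fin.ext rfl)
  rw [hget, rsOf_map_snd]
  simp only [zero_add, blockExp]
  have hv : ((finCongr (rsOf_length c g.1).symm j : Fin (rsOf c g.1).length) : ℕ) = (j : ℕ) := by
    simp
  rw [hv]

theorem tsum_if_subtype {ι : Type*} (P : ι → Prop) [DecidablePred P] (F : ι → ℝ) :
    (∑' x : ι, if P x then F x else 0) = ∑' x : {y : ι // P y}, F x.1 := by
  rw [show (∑' x : {y : ι // P y}, F x.1)
      = ∑' x : ι, Set.indicator {y | P y} F x from tsum_subtype {y | P y} F]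
  exact tsum_congr fun x => by by_cases h : P x <;> simp [Set.indicator_apply, h]


end MIMZV

/-- Representation of multi-interpolated MZVs via compositions:
`ζ^t(i₁,…,i_k) = ∑_{p ∈ 𝒫(k)} ∑_{ℓ₁ > ⋯ > ℓ_r ≥ 1} ∏_j t_{ℓ_j}^{p_j-1} ℓ_j^{-I_j}`. -/
theorem multi_interpolated_composition_representation
    (k : ℕ) (hk : 1 ≤ k) (i : ℕ → ℕ) (hi0 : 2 ≤ i 0) (hi : ∀ m < k, 1 ≤ i m)
    (t : ℕ → ℝ) (ht : ∀ m, |t m| ≤ 1) :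
    (∑' f : Fin k → ℕ,
        if (∀ j, 1 ≤ f j) ∧ (∀ a b : Fin k, a ≤ b → f b ≤ f a) then
          wt t f * ∏ j : Fin k, ((f j : ℝ) ^ i (j : ℕ))⁻¹
        else 0)
      = ∑' c : {l : List ℕ // l.sum = k ∧ ∀ p ∈ l, 0 < p},
          ∑' g : Fin c.1.length → ℕ,
            if (∀ j, 1 ≤ g j) ∧ (∀ a b : Fin c.1.length, a < b → g b < g a) then
              ∏ j : Fin c.1.length,
                t (g j) ^ (c.1.get j - 1) * ((g j : ℝ) ^ blockExp c.1 i j)⁻¹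
            else 0 := by
  classical
  have hA := MIMZV.summable_A k hk i hi0 hi t ht
  set Φ : (Σ c : MIMZV.CT k, MIMZV.BT c) ≃ MIMZV.AT k :=
    Equiv.ofBijective _ (MIMZV.toA_bijective (k := k)) with hΦ
  have key : ∀ s : (Σ c : MIMZV.CT k, MIMZV.BT c),
      (∏ j : Fin s.1.1.length,
        t (s.2.1 j) ^ (s.1.1.get j - 1) * ((s.2.1 j : ℝ) ^ blockExp s.1.1 i j)⁻¹)
      = wt t (MIMZV.toA s).1 * ∏ j : Fin k, (((MIMZV.toA s).1 j : ℝ) ^ i (j : ℕ))⁻¹ :=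
    fun ⟨c, g⟩ => MIMZV.key_eq i t c g
  have hS : Summable (fun s : (Σ c : MIMZV.CT k, MIMZV.BT c) =>
      ∏ j : Fin s.1.1.length,
        t (s.2.1 j) ^ (s.1.1.get j - 1) * ((s.2.1 j : ℝ) ^ blockExp s.1.1 i j)⁻¹) := by
    refine Summable.congr ((Φ.summable_iff).2 hA) fun s => ?_
    exact (key s).symm
  calc (∑' f : Fin k → ℕ,
        if (∀ j, 1 ≤ f j) ∧ (∀ a b : Fin k, a ≤ b → f b ≤ f a) then
          wt t f * ∏ j : Fin k, ((f j : ℝ) ^ i (j : ℕ))⁻¹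
        else 0)
      = ∑' a : MIMZV.AT k, wt t a.1 * ∏ j : Fin k, ((a.1 j : ℝ) ^ i (j : ℕ))⁻¹ :=
        MIMZV.tsum_if_subtype _ _
    _ = ∑' s : (Σ c : MIMZV.CT k, MIMZV.BT c),
          wt t (MIMZV.toA s).1 * ∏ j : Fin k, (((MIMZV.toA s).1 j : ℝ) ^ i (j : ℕ))⁻¹ :=
        (Φ.tsum_eq (fun a : MIMZV.AT k =>
          wt t a.1 * ∏ j : Fin k, ((a.1 j : ℝ) ^ i (j : ℕ))⁻¹)).symm
    _ = ∑' s : (Σ c : MIMZV.CT k, MIMZV.BT c),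
          ∏ j : Fin s.1.1.length,
            t (s.2.1 j) ^ (s.1.1.get j - 1) * ((s.2.1 j : ℝ) ^ blockExp s.1.1 i j)⁻¹ :=
        tsum_congr fun s => (key s).symm
    _ = ∑' c : MIMZV.CT k, ∑' b : MIMZV.BT c,
          ∏ j : Fin c.1.length,
            t (b.1 j) ^ (c.1.get j - 1) * ((b.1 j : ℝ) ^ blockExp c.1 i j)⁻¹ :=
        hS.tsum_sigma
    _ = ∑' c : {l : List ℕ // l.sum = k ∧ ∀ p ∈ l, 0 < p},
          ∑' g : Fin c.1.length → ℕ,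
            if (∀ j, 1 ≤ g j) ∧ (∀ a b : Fin c.1.length, a < b → g b < g a) then
              ∏ j : Fin c.1.length,
                t (g j) ^ (c.1.get j - 1) * ((g j : ℝ) ^ blockExp c.1 i j)⁻¹
            else 0 :=
        tsum_congr fun c => (MIMZV.tsum_if_subtype
          (fun g : Fin c.1.length → ℕ =>
            (∀ j, 1 ≤ g j) ∧ (∀ a b : Fin c.1.length, a < b → g b < g a))
          (fun g : Fin c.1.length → ℕ => ∏ j : Fin c.1.length,
            t (g j) ^ (c.1.get j - 1) * ((g j : ℝ) ^ blockExp c.1 i j)⁻¹)).symm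
end

section
/- For integers $i \ge 2$, $j \ge 2$, $k \ge 1$, and any sequence $(t_\ell)$ with $t_\ell \in [-1,1]$: $\zeta(i) \cdot \zeta^{\vec{t}}(j,k) = \zeta(i,j,k) + \zeta(i+j,k) + \zeta(j,i,k) + \zeta(j,i+k) + \zeta(j,k,i) + \sum_{\ell_1 > \ell \ge 1} \frac{t_\ell}{\ell_1^{i} \ell^{j+k}} + \sum_{\ell \ge 1} \frac{t_\ell}{\ell^{i+j+k}} + \sum_{\ell > \ell_2 \ge 1} \frac{t_\ell}{\ell^{j+k} \ell_2^{i}}$. -/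
open Function



private lemma pinv_summable {e : ℕ} (he : 2 ≤ e) :
    Summable (fun n : ℕ => ((n : ℝ) ^ e)⁻¹) :=
  Real.summable_nat_pow_inv.mpr (by omega)

private lemma double_le {a b : ℕ} (ha : 2 ≤ a) (hb : 1 ≤ b) (p : ℕ × ℕ) :
    (if p.2 < p.1 then ((p.1 : ℝ) ^ a * (p.2 : ℝ) ^ b)⁻¹ else 0)
      ≤ ((p.1 : ℝ) ^ ((3 : ℝ)/2))⁻¹ * ((p.2 : ℝ) ^ ((3 : ℝ)/2))⁻¹ := by
  split_ifs with hlt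
  · rcases Nat.eq_zero_or_pos p.2 with h0 | h1
    · rw [h0]
      simp only [Nat.cast_zero, zero_pow (by omega : b ≠ 0), mul_zero, inv_zero]
      positivity
    · set x : ℝ := (p.1 : ℝ) with hxdef
      set y : ℝ := (p.2 : ℝ) with hydef
      have hy1 : (1 : ℝ) ≤ y := by rw [hydef]; exact_mod_cast h1
      have hyx : y ≤ x := by rw [hydef, hxdef]; exact_mod_cast hlt.le
      have hx1 : (1 : ℝ) ≤ x := hy1.trans hyx
      have hx0 : (0 : ℝ) < x := by linarith
      have hy0 : (0 : ℝ) < y := by linarith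
      rw [← mul_inv]
      apply inv_anti₀ (by positivity)
      have e1 : y ^ ((3:ℝ)/2) = y ^ (1:ℝ) * y ^ ((1:ℝ)/2) := by
        rw [← Real.rpow_add hy0]; norm_num
      have e2 : x ^ ((3:ℝ)/2) * x ^ ((1:ℝ)/2) = x ^ (2:ℝ) := by
        rw [← Real.rpow_add hx0]; norm_num
      have h2 : y ^ ((1:ℝ)/2) ≤ x ^ ((1:ℝ)/2) :=
        Real.rpow_le_rpow hy0.le hyx (by norm_num)
      have step1 : x ^ ((3:ℝ)/2) * y ^ ((3:ℝ)/2) ≤ x ^ (2:ℝ) * y := by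
        calc x ^ ((3:ℝ)/2) * y ^ ((3:ℝ)/2)
            = x ^ ((3:ℝ)/2) * (y ^ (1:ℝ) * y ^ ((1:ℝ)/2)) := by rw [e1]
          _ ≤ x ^ ((3:ℝ)/2) * (y ^ (1:ℝ) * x ^ ((1:ℝ)/2)) := by
              have hp : (0:ℝ) ≤ x ^ ((3:ℝ)/2) := by positivity
              have hyp : (0:ℝ) ≤ y ^ (1:ℝ) := by positivity
              nlinarith [mul_le_mul_of_nonneg_left h2 hyp]
          _ = (x ^ ((3:ℝ)/2) * x ^ ((1:ℝ)/2)) * y ^ (1:ℝ) := by ring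
          _ = x ^ (2:ℝ) * y := by rw [e2, Real.rpow_one]
      have step2 : x ^ (2:ℝ) * y ≤ x ^ a * y ^ b := by
        have hxx : x ^ (2:ℝ) = x ^ (2:ℕ) := by rw [show ((2:ℝ)) = ((2:ℕ):ℝ) by norm_num, Real.rpow_natCast]
        rw [hxx]
        have h3 : x ^ (2:ℕ) ≤ x ^ a := pow_le_pow_right₀ hx1 (by omega)
        have h4 : y ≤ y ^ b := le_self_pow₀ hy1 (by omega)
        have := mul_le_mul h3 h4 hy0.le (by positivity)
        linarith
      linarith
  · positivity

private lemma double_summable {a b : ℕ} (ha : 2 ≤ a) (hb : 1 ≤ b) :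
    Summable (fun p : ℕ × ℕ =>
      if p.2 < p.1 then ((p.1 : ℝ) ^ a * (p.2 : ℝ) ^ b)⁻¹ else 0) := by
  have hs : Summable (fun n : ℕ => ((n : ℝ) ^ ((3:ℝ)/2))⁻¹) :=
    Real.summable_nat_rpow_inv.mpr (by norm_num)
  have hprod := hs.mul_of_nonneg hs (fun n => by positivity) (fun n => by positivity)
  exact hprod.of_nonneg_of_le
    (fun p => by split_ifs <;> positivity) (double_le ha hb)

private lemma ite_summable {α : Type*} (c : α → Prop) [DecidablePred c] (F : α → ℝ)
    (h0 : ∀ q, 0 ≤ F q) (hS : Summable F) :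
    Summable (fun q => if c q then F q else 0) :=
  hS.of_nonneg_of_le (fun q => by split_ifs with h; exacts [h0 q, le_rfl])
    (fun q => by split_ifs with h; exacts [le_rfl, h0 q])

private lemma partA (i j k : ℕ) (hi : 2 ≤ i) (hj : 2 ≤ j) (hk : 1 ≤ k) :
    (∑' ℓ : ℕ, ((ℓ : ℝ) ^ i)⁻¹) *
      (∑' p : ℕ × ℕ, if p.2 < p.1 then ((p.1 : ℝ) ^ j * (p.2 : ℝ) ^ k)⁻¹ else 0)
  = (∑' p : ℕ × ℕ × ℕ, if p.2.2 < p.2.1 ∧ p.2.1 < p.1 then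
        ((p.1 : ℝ) ^ i * (p.2.1 : ℝ) ^ j * (p.2.2 : ℝ) ^ k)⁻¹ else 0)
    + (∑' p : ℕ × ℕ, if p.2 < p.1 then ((p.1 : ℝ) ^ (i + j) * (p.2 : ℝ) ^ k)⁻¹ else 0)
    + (∑' p : ℕ × ℕ × ℕ, if p.2.2 < p.2.1 ∧ p.2.1 < p.1 then
        ((p.1 : ℝ) ^ j * (p.2.1 : ℝ) ^ i * (p.2.2 : ℝ) ^ k)⁻¹ else 0)
    + (∑' p : ℕ × ℕ, if p.2 < p.1 then ((p.1 : ℝ) ^ j * (p.2 : ℝ) ^ (i + k))⁻¹ else 0)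
    + (∑' p : ℕ × ℕ × ℕ, if p.2.2 < p.2.1 ∧ p.2.1 < p.1 then
        ((p.1 : ℝ) ^ j * (p.2.1 : ℝ) ^ k * (p.2.2 : ℝ) ^ i)⁻¹ else 0) := by
  set f : ℕ → ℝ := fun n => ((n : ℝ) ^ i)⁻¹ with hf
  set g : ℕ × ℕ → ℝ :=
    fun p => if p.2 < p.1 then ((p.1 : ℝ) ^ j * (p.2 : ℝ) ^ k)⁻¹ else 0 with hg
  have Sf : Summable f := pinv_summable hi
  have Sg : Summable g := double_summable hj hk
  have hf0 : ∀ n, 0 ≤ f n := fun n => by positivity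
  have hg0 : ∀ p, 0 ≤ g p := fun p => by simp only [hg]; split_ifs <;> positivity
  have Sfn : Summable (fun n => ‖f n‖) := by
    simpa [Real.norm_eq_abs, abs_of_nonneg (hf0 _)] using Sf
  have Sgn : Summable (fun p => ‖g p‖) := by
    simpa [Real.norm_eq_abs, abs_of_nonneg (hg0 _)] using Sg
  set F : ℕ × ℕ × ℕ → ℝ := fun q => f q.1 * g q.2 with hF
  have SF : Summable F := Sf.mul_of_nonneg Sg hf0 hg0
  have hF0 : ∀ q, 0 ≤ F q := fun q => mul_nonneg (hf0 _) (hg0 _)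
  have hprod : (∑' n, f n) * (∑' p, g p) = ∑' q : ℕ × ℕ × ℕ, F q :=
    tsum_mul_tsum_of_summable_norm Sfn Sgn
  set F1 : ℕ × ℕ × ℕ → ℝ := fun q => if q.2.1 < q.1 then F q else 0 with hF1
  set F2 : ℕ × ℕ × ℕ → ℝ := fun q => if q.1 = q.2.1 then F q else 0 with hF2
  set F3 : ℕ × ℕ × ℕ → ℝ :=
    fun q => if q.2.2 < q.1 ∧ q.1 < q.2.1 then F q else 0 with hF3
  set F4 : ℕ × ℕ × ℕ → ℝ := fun q => if q.1 = q.2.2 then F q else 0 with hF4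
  set F5 : ℕ × ℕ × ℕ → ℝ := fun q => if q.1 < q.2.2 then F q else 0 with hF5
  have S1 : Summable F1 := ite_summable _ F hF0 SF
  have S2 : Summable F2 := ite_summable _ F hF0 SF
  have S3 : Summable F3 := ite_summable _ F hF0 SF
  have S4 : Summable F4 := ite_summable _ F hF0 SF
  have S5 : Summable F5 := ite_summable _ F hF0 SF
  have hde : ∀ q, F q = F1 q + F2 q + F3 q + F4 q + F5 q := by
    rintro ⟨l, m, n⟩
    by_cases hmn : n < m
    · simp only [hF1, hF2, hF3, hF4, hF5]
      split_ifs with h1 h2 h3 h4 h5 <;> (first | omega | ring1)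
    · have hz : F (l, m, n) = 0 := by simp [hF, hg, hmn]
      simp only [hF1, hF2, hF3, hF4, hF5]
      split_ifs <;> simp [hz]
  have hsplit : ∑' q, F q = (∑' q, F1 q) + (∑' q, F2 q) + (∑' q, F3 q)
      + (∑' q, F4 q) + (∑' q, F5 q) := by
    rw [tsum_congr hde,
      Summable.tsum_add (((S1.add S2).add S3).add S4) S5,
      Summable.tsum_add ((S1.add S2).add S3) S4,
      Summable.tsum_add (S1.add S2) S3,
      Summable.tsum_add S1 S2]
  have hT1 : ∑' q, F1 q = ∑' p : ℕ × ℕ × ℕ, if p.2.2 < p.2.1 ∧ p.2.1 < p.1 then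
      ((p.1 : ℝ) ^ i * (p.2.1 : ℝ) ^ j * (p.2.2 : ℝ) ^ k)⁻¹ else 0 := by
    refine tsum_congr ?_
    rintro ⟨l, m, n⟩
    simp only [hF1, hF, hg]
    split_ifs with h1 h2 h3 <;> (first | omega | (simp only [mul_inv, pow_add, mul_zero, zero_mul]; try ring1))
  have hT2 : ∑' q, F2 q = ∑' p : ℕ × ℕ, if p.2 < p.1 then
      ((p.1 : ℝ) ^ (i + j) * (p.2 : ℝ) ^ k)⁻¹ else 0 := by
    have hinj : Injective (fun p : ℕ × ℕ => ((p.1, p.1, p.2) : ℕ × ℕ × ℕ)) := by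
      rintro ⟨a1, a2⟩ ⟨b1, b2⟩ h
      simp only [Prod.mk.injEq] at h
      exact Prod.ext h.1 h.2.2
    have hsupp : support F2 ⊆ Set.range (fun p : ℕ × ℕ => ((p.1, p.1, p.2) : ℕ × ℕ × ℕ)) := by
      rintro ⟨l, m, n⟩ hq
      simp only [mem_support, hF2] at hq
      have hlm : l = m := by by_contra h; exact hq (if_neg h)
      exact ⟨(l, n), by simp [hlm]⟩
    rw [← hinj.tsum_eq hsupp]
    refine tsum_congr ?_
    rintro ⟨m, n⟩
    simp only [hF2, hF, hg, if_pos rfl]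
    split_ifs with h1 h2 <;> (first | omega | (simp only [mul_inv, pow_add, mul_zero, zero_mul]; try ring1))
  have hT3 : ∑' q, F3 q = ∑' p : ℕ × ℕ × ℕ, if p.2.2 < p.2.1 ∧ p.2.1 < p.1 then
      ((p.1 : ℝ) ^ j * (p.2.1 : ℝ) ^ i * (p.2.2 : ℝ) ^ k)⁻¹ else 0 := by
    rw [← Equiv.tsum_eq (⟨fun q => ((q.2.1, q.1, q.2.2) : ℕ × ℕ × ℕ),
      fun q => (q.2.1, q.1, q.2.2), fun q => rfl, fun q => rfl⟩ : (ℕ × ℕ × ℕ) ≃ (ℕ × ℕ × ℕ)) F3]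
    refine tsum_congr ?_
    rintro ⟨a, b, c⟩
    simp only [Equiv.coe_fn_mk, hF3, hF, hg]
    split_ifs with h1 h2 h3 <;> (first | omega | (simp only [mul_inv, pow_add, mul_zero, zero_mul]; try ring1))
  have hT4 : ∑' q, F4 q = ∑' p : ℕ × ℕ, if p.2 < p.1 then
      ((p.1 : ℝ) ^ j * (p.2 : ℝ) ^ (i + k))⁻¹ else 0 := by
    have hinj : Injective (fun p : ℕ × ℕ => ((p.2, p.1, p.2) : ℕ × ℕ × ℕ)) := by
      rintro ⟨a1, a2⟩ ⟨b1, b2⟩ h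
      simp only [Prod.mk.injEq] at h
      exact Prod.ext h.2.1 h.1
    have hsupp : support F4 ⊆ Set.range (fun p : ℕ × ℕ => ((p.2, p.1, p.2) : ℕ × ℕ × ℕ)) := by
      rintro ⟨l, m, n⟩ hq
      simp only [mem_support, hF4] at hq
      have hln : l = n := by by_contra h; exact hq (if_neg h)
      exact ⟨(m, n), by simp [hln]⟩
    rw [← hinj.tsum_eq hsupp]
    refine tsum_congr ?_
    rintro ⟨m, n⟩
    simp only [hF4, hF, hg, if_pos rfl]
    split_ifs with h1 h2 <;> (first | omega | (simp only [mul_inv, pow_add, mul_zero, zero_mul]; try ring1))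
  have hT5 : ∑' q, F5 q = ∑' p : ℕ × ℕ × ℕ, if p.2.2 < p.2.1 ∧ p.2.1 < p.1 then
      ((p.1 : ℝ) ^ j * (p.2.1 : ℝ) ^ k * (p.2.2 : ℝ) ^ i)⁻¹ else 0 := by
    rw [← Equiv.tsum_eq (⟨fun q => ((q.2.2, q.1, q.2.1) : ℕ × ℕ × ℕ),
      fun q => (q.2.1, q.2.2, q.1), fun q => rfl, fun q => rfl⟩ :
      (ℕ × ℕ × ℕ) ≃ (ℕ × ℕ × ℕ)) F5]
    refine tsum_congr ?_
    rintro ⟨a, b, c⟩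
    simp only [Equiv.coe_fn_mk, hF5, hF, hg]
    split_ifs with h1 h2 h3 <;> (first | omega | (simp only [mul_inv, pow_add, mul_zero, zero_mul]; try ring1))
  rw [hprod, hsplit, hT1, hT2, hT3, hT4, hT5]

private lemma partB (i j k : ℕ) (hi : 2 ≤ i) (hj : 2 ≤ j) (hk : 1 ≤ k)
    (t : ℕ → ℝ) (ht : ∀ ℓ, |t ℓ| ≤ 1) :
    (∑' ℓ : ℕ, ((ℓ : ℝ) ^ i)⁻¹) * (∑' ℓ : ℕ, t ℓ * ((ℓ : ℝ) ^ (j + k))⁻¹)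
  = (∑' p : ℕ × ℕ, if p.2 < p.1 then t p.2 * ((p.1 : ℝ) ^ i * (p.2 : ℝ) ^ (j + k))⁻¹ else 0)
    + (∑' ℓ : ℕ, t ℓ * ((ℓ : ℝ) ^ (i + j + k))⁻¹)
    + (∑' p : ℕ × ℕ, if p.2 < p.1 then t p.1 * ((p.1 : ℝ) ^ (j + k) * (p.2 : ℝ) ^ i)⁻¹ else 0) := by
  set f : ℕ → ℝ := fun n => ((n : ℝ) ^ i)⁻¹ with hfd
  set h : ℕ → ℝ := fun n => t n * ((n : ℝ) ^ (j + k))⁻¹ with hhd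
  have Sf : Summable f := pinv_summable hi
  have hf0 : ∀ n, 0 ≤ f n := fun n => by positivity
  have Sfn : Summable (fun n => ‖f n‖) := by
    simpa [Real.norm_eq_abs, abs_of_nonneg (hf0 _)] using Sf
  have habs : ∀ n, ‖h n‖ ≤ ((n : ℝ) ^ (j + k))⁻¹ := by
    intro n
    rw [hhd]
    rw [Real.norm_eq_abs, abs_mul,
      abs_of_nonneg (by positivity : (0:ℝ) ≤ ((n : ℝ) ^ (j + k))⁻¹)]
    exact mul_le_of_le_one_left (by positivity) (ht n)
  have Shn : Summable (fun n => ‖h n‖) :=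
    (pinv_summable (by omega : 2 ≤ j + k)).of_nonneg_of_le
      (fun n => norm_nonneg _) habs
  have Sh : Summable h := Shn.of_norm
  have hprod : (∑' n, f n) * (∑' n, h n) = ∑' q : ℕ × ℕ, f q.1 * h q.2 :=
    tsum_mul_tsum_of_summable_norm Sfn Shn
  set H : ℕ × ℕ → ℝ := fun q => f q.1 * h q.2 with hHd
  have SHn : Summable (fun q : ℕ × ℕ => ‖H q‖) := Sfn.mul_norm Shn
  set H1 : ℕ × ℕ → ℝ := fun q => if q.2 < q.1 then H q else 0 with hH1
  set H2 : ℕ × ℕ → ℝ := fun q => if q.1 = q.2 then H q else 0 with hH2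
  set H3 : ℕ × ℕ → ℝ := fun q => if q.1 < q.2 then H q else 0 with hH3
  have bnd : ∀ (c : ℕ × ℕ → Prop) (inst : DecidablePred c) (q : ℕ × ℕ),
      ‖if c q then H q else 0‖ ≤ ‖H q‖ := by
    intro c inst q
    split_ifs
    · exact le_rfl
    · simp
  have S1 : Summable H1 := Summable.of_norm_bounded SHn (bnd _ _)
  have S2 : Summable H2 := Summable.of_norm_bounded SHn (bnd _ _)
  have S3 : Summable H3 := Summable.of_norm_bounded SHn (bnd _ _)
  have hde : ∀ q, H q = H1 q + H2 q + H3 q := by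
    rintro ⟨l, m⟩
    simp only [hH1, hH2, hH3]
    split_ifs with h1 h2 h3 <;> (first | omega | ring1)
  have hsplit : ∑' q, H q = (∑' q, H1 q) + (∑' q, H2 q) + (∑' q, H3 q) := by
    rw [tsum_congr hde, Summable.tsum_add (S1.add S2) S3, Summable.tsum_add S1 S2]
  have hT6 : ∑' q, H1 q = ∑' p : ℕ × ℕ,
      if p.2 < p.1 then t p.2 * ((p.1 : ℝ) ^ i * (p.2 : ℝ) ^ (j + k))⁻¹ else 0 := by
    refine tsum_congr ?_
    rintro ⟨l, m⟩
    simp only [hH1, hHd, hfd, hhd]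
    split_ifs with h1 <;>
      (first | omega | (simp only [mul_inv, pow_add, mul_zero, zero_mul]; try ring1))
  have hT7 : ∑' q, H2 q = ∑' ℓ : ℕ, t ℓ * ((ℓ : ℝ) ^ (i + j + k))⁻¹ := by
    have hinj : Injective (fun n : ℕ => ((n, n) : ℕ × ℕ)) := by
      intro a b hab
      simpa using congrArg Prod.fst hab
    have hsupp : support H2 ⊆ Set.range (fun n : ℕ => ((n, n) : ℕ × ℕ)) := by
      rintro ⟨l, m⟩ hq
      simp only [mem_support, hH2] at hq
      have hlm : l = m := by by_contra hc; exact hq (if_neg hc)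
      exact ⟨l, by simp [hlm]⟩
    rw [← hinj.tsum_eq hsupp]
    refine tsum_congr ?_
    intro n
    simp only [hH2, hHd, hfd, hhd, if_pos rfl]
    simp only [mul_inv, pow_add]
    ring
  have hT8 : ∑' q, H3 q = ∑' p : ℕ × ℕ,
      if p.2 < p.1 then t p.1 * ((p.1 : ℝ) ^ (j + k) * (p.2 : ℝ) ^ i)⁻¹ else 0 := by
    rw [← Equiv.tsum_eq (Equiv.prodComm ℕ ℕ) H3]
    refine tsum_congr ?_
    rintro ⟨a, b⟩
    simp only [Equiv.prodComm_apply, Prod.swap_prod_mk, hH3, hHd, hfd, hhd]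
    split_ifs with h1 <;>
      (first | omega | (simp only [mul_inv, pow_add, mul_zero, zero_mul]; try ring1))
  rw [hprod, hsplit, hT6, hT7, hT8]

private lemma cleanN (e : ℕ) (he : 1 ≤ e) (n : ℕ) :
    (if 1 ≤ n then ((n : ℝ) ^ e)⁻¹ else 0) = ((n : ℝ) ^ e)⁻¹ := by
  rcases Nat.eq_zero_or_pos n with rfl | hn
  · simp [zero_pow (by omega : e ≠ 0)]
  · rw [if_pos (by omega : 1 ≤ n)]

private lemma cleanNt (e : ℕ) (he : 1 ≤ e) (r : ℝ) (n : ℕ) :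
    (if 1 ≤ n then r * ((n : ℝ) ^ e)⁻¹ else 0) = r * ((n : ℝ) ^ e)⁻¹ := by
  rcases Nat.eq_zero_or_pos n with rfl | hn
  · simp [zero_pow (by omega : e ≠ 0)]
  · rw [if_pos (by omega : 1 ≤ n)]

private lemma cleanP (a b : ℕ) (hb : 1 ≤ b) (p : ℕ × ℕ) :
    (if 1 ≤ p.2 ∧ p.2 < p.1 then ((p.1 : ℝ) ^ a * (p.2 : ℝ) ^ b)⁻¹ else 0)
      = if p.2 < p.1 then ((p.1 : ℝ) ^ a * (p.2 : ℝ) ^ b)⁻¹ else 0 := by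
  rcases Nat.eq_zero_or_pos p.2 with h | h
  · simp [h, zero_pow (by omega : b ≠ 0)]
  · by_cases hlt : p.2 < p.1
    · rw [if_pos ⟨h, hlt⟩, if_pos hlt]
    · rw [if_neg (by tauto), if_neg hlt]

private lemma cleanPt (a b : ℕ) (hb : 1 ≤ b) (r : ℕ × ℕ → ℝ) (p : ℕ × ℕ) :
    (if 1 ≤ p.2 ∧ p.2 < p.1 then r p * ((p.1 : ℝ) ^ a * (p.2 : ℝ) ^ b)⁻¹ else 0)
      = if p.2 < p.1 then r p * ((p.1 : ℝ) ^ a * (p.2 : ℝ) ^ b)⁻¹ else 0 := by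
  rcases Nat.eq_zero_or_pos p.2 with h | h
  · simp [h, zero_pow (by omega : b ≠ 0)]
  · by_cases hlt : p.2 < p.1
    · rw [if_pos ⟨h, hlt⟩, if_pos hlt]
    · rw [if_neg (by tauto), if_neg hlt]

private lemma cleanT (a b c : ℕ) (hc : 1 ≤ c) (p : ℕ × ℕ × ℕ) :
    (if 1 ≤ p.2.2 ∧ p.2.2 < p.2.1 ∧ p.2.1 < p.1 then
        ((p.1 : ℝ) ^ a * (p.2.1 : ℝ) ^ b * (p.2.2 : ℝ) ^ c)⁻¹ else 0)
      = if p.2.2 < p.2.1 ∧ p.2.1 < p.1 then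
        ((p.1 : ℝ) ^ a * (p.2.1 : ℝ) ^ b * (p.2.2 : ℝ) ^ c)⁻¹ else 0 := by
  rcases Nat.eq_zero_or_pos p.2.2 with h | h
  · simp [h, zero_pow (by omega : c ≠ 0)]
  · by_cases hlt : p.2.2 < p.2.1 ∧ p.2.1 < p.1
    · rw [if_pos ⟨h, hlt⟩, if_pos hlt]
    · rw [if_neg (by tauto), if_neg hlt]

/-- Depth-1 × depth-2 multi-interpolated stuffle relation. -/
theorem multi_interpolated_stuffle_depth_one_two
    (i j k : ℕ) (hi : 2 ≤ i) (hj : 2 ≤ j) (hk : 1 ≤ k)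
    (t : ℕ → ℝ) (ht : ∀ ℓ, |t ℓ| ≤ 1) :
    (∑' ℓ : ℕ, if 1 ≤ ℓ then ((ℓ : ℝ) ^ i)⁻¹ else 0)
        * ((∑' p : ℕ × ℕ, if 1 ≤ p.2 ∧ p.2 < p.1 then
              ((p.1 : ℝ) ^ j * (p.2 : ℝ) ^ k)⁻¹ else 0)
            + ∑' ℓ : ℕ, if 1 ≤ ℓ then t ℓ * ((ℓ : ℝ) ^ (j + k))⁻¹ else 0)
      = (∑' p : ℕ × ℕ × ℕ, if 1 ≤ p.2.2 ∧ p.2.2 < p.2.1 ∧ p.2.1 < p.1 then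
            ((p.1 : ℝ) ^ i * (p.2.1 : ℝ) ^ j * (p.2.2 : ℝ) ^ k)⁻¹ else 0)
        + (∑' p : ℕ × ℕ, if 1 ≤ p.2 ∧ p.2 < p.1 then
            ((p.1 : ℝ) ^ (i + j) * (p.2 : ℝ) ^ k)⁻¹ else 0)
        + (∑' p : ℕ × ℕ × ℕ, if 1 ≤ p.2.2 ∧ p.2.2 < p.2.1 ∧ p.2.1 < p.1 then
            ((p.1 : ℝ) ^ j * (p.2.1 : ℝ) ^ i * (p.2.2 : ℝ) ^ k)⁻¹ else 0)
        + (∑' p : ℕ × ℕ, if 1 ≤ p.2 ∧ p.2 < p.1 then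
            ((p.1 : ℝ) ^ j * (p.2 : ℝ) ^ (i + k))⁻¹ else 0)
        + (∑' p : ℕ × ℕ × ℕ, if 1 ≤ p.2.2 ∧ p.2.2 < p.2.1 ∧ p.2.1 < p.1 then
            ((p.1 : ℝ) ^ j * (p.2.1 : ℝ) ^ k * (p.2.2 : ℝ) ^ i)⁻¹ else 0)
        + (∑' p : ℕ × ℕ, if 1 ≤ p.2 ∧ p.2 < p.1 then
            t p.2 * ((p.1 : ℝ) ^ i * (p.2 : ℝ) ^ (j + k))⁻¹ else 0)
        + (∑' ℓ : ℕ, if 1 ≤ ℓ then t ℓ * ((ℓ : ℝ) ^ (i + j + k))⁻¹ else 0)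
        + (∑' p : ℕ × ℕ, if 1 ≤ p.2 ∧ p.2 < p.1 then
            t p.1 * ((p.1 : ℝ) ^ (j + k) * (p.2 : ℝ) ^ i)⁻¹ else 0) := by
  rw [tsum_congr (cleanN i (by omega)),
      tsum_congr (cleanP j k (by omega)),
      tsum_congr (fun ℓ => cleanNt (j + k) (by omega) (t ℓ) ℓ),
      tsum_congr (cleanT i j k (by omega)),
      tsum_congr (cleanP (i + j) k (by omega)),
      tsum_congr (cleanT j i k (by omega)),
      tsum_congr (cleanP j (i + k) (by omega)),
      tsum_congr (cleanT j k i (by omega)),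
      tsum_congr (cleanPt i (j + k) (by omega) (fun p => t p.2)),
      tsum_congr (fun ℓ => cleanNt (i + j + k) (by omega) (t ℓ) ℓ),
      tsum_congr (cleanPt (j + k) i (by omega) (fun p => t p.1)),
      mul_add, partA i j k hi hj hk, partB i j k hi hj hk t ht]
  ring
end

section
/- With the setup of the operator $S^{\vec{t}}$ on words over letters $z_i$ interleaved with powers of formal symbols: for two formal non-commuting symbols $\vec{t}_1, \vec{t}_2$, the operators satisfy $S^{\vec{t}_1 + \vec{t}_2} = S^{\vec{t}_1} \circ S^{\vec{t}_2}$, i.e., for every word $x$, $S^{\vec{t}_1+\vec{t}_2}(x) = S^{\vec{t}_1}(S^{\vec{t}_2}(x))$. -/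
/- A word `t̄₁^{m₁} t̄₂^{k₁} a₁ ⋯ t̄₁^{m_r} t̄₂^{k_r} a_r` (letters interleaved with
powers of two commuting formal symbols, neither commuting with the letters) is
encoded as a list of triples `(m, k, a)`: the letter `z_a` preceded by
`t̄₁^m t̄₂^k`.  The module is `List (ℕ × ℕ × ℕ) →₀ ℚ`. -/

/-- Contraction of a letter `a` into the first letter of a word (passing through
the symbol powers attached to it); contraction into the empty word is `0`. -/
noncomputable def diaWord (a : ℕ) : List (ℕ × ℕ × ℕ) → (List (ℕ × ℕ × ℕ) →₀ ℚ)
  | [] => 0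
  | (m, k, b) :: w => Finsupp.single ((m, k, a + b) :: w) 1

/-- Linear extension of the contraction. -/
noncomputable def diaComb (a : ℕ) (x : List (ℕ × ℕ × ℕ) →₀ ℚ) :
    List (ℕ × ℕ × ℕ) →₀ ℚ :=
  x.sum fun w c => c • diaWord a w

/-- Multiply a word on the left by `t̄₁^{d₁} t̄₂^{d₂}`. -/
def addPre (d₁ d₂ : ℕ) : List (ℕ × ℕ × ℕ) → List (ℕ × ℕ × ℕ)
  | [] => []
  | (m, k, b) :: w => (m + d₁, k + d₂, b) :: w

/-- The operator `S^{t̄₁}`: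
`S^{t̄₁}(t̄₁^m t̄₂^k a u) = t̄₁^m t̄₂^k a S^{t̄₁}(u) + t̄₁^{m+1} t̄₂^k (a ⋄ S^{t̄₁}(u))`. -/
noncomputable def S1 : List (ℕ × ℕ × ℕ) → (List (ℕ × ℕ × ℕ) →₀ ℚ)
  | [] => Finsupp.single [] 1
  | (m, k, a) :: u =>
      Finsupp.mapDomain ((m, k, a) :: ·) (S1 u)
        + Finsupp.mapDomain (addPre (m + 1) k) (diaComb a (S1 u))

/-- The operator `S^{t̄₂}`. -/
noncomputable def S2 : List (ℕ × ℕ × ℕ) → (List (ℕ × ℕ × ℕ) →₀ ℚ)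
  | [] => Finsupp.single [] 1
  | (m, k, a) :: u =>
      Finsupp.mapDomain ((m, k, a) :: ·) (S2 u)
        + Finsupp.mapDomain (addPre m (k + 1)) (diaComb a (S2 u))

/-- The operator `S^{t̄₁+t̄₂}`:
`S(t̄₁^m t̄₂^k a u) = t̄₁^m t̄₂^k a S(u) + t̄₁^m t̄₂^k (t̄₁ + t̄₂)(a ⋄ S(u))`. -/
noncomputable def S12 : List (ℕ × ℕ × ℕ) → (List (ℕ × ℕ × ℕ) →₀ ℚ)
  | [] => Finsupp.single [] 1
  | (m, k, a) :: u =>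
      Finsupp.mapDomain ((m, k, a) :: ·) (S12 u)
        + Finsupp.mapDomain (addPre (m + 1) k) (diaComb a (S12 u))
        + Finsupp.mapDomain (addPre m (k + 1)) (diaComb a (S12 u))

/-- Linear extension of `S^{t̄₁}` to combinations of words. -/
noncomputable def S1L (x : List (ℕ × ℕ × ℕ) →₀ ℚ) : List (ℕ × ℕ × ℕ) →₀ ℚ :=
  x.sum fun w c => c • S1 w

abbrev W := List (ℕ × ℕ × ℕ)

/-- `diaComb` as a linear map. -/
noncomputable def Dm (a : ℕ) : (W →₀ ℚ) →ₗ[ℚ] (W →₀ ℚ) :=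
  Finsupp.linearCombination ℚ (diaWord a)

lemma diaComb_eq (a : ℕ) (x : W →₀ ℚ) : diaComb a x = Dm a x := by
  rw [Dm, Finsupp.linearCombination_apply]; rfl

/-- `S1L` as a linear map. -/
noncomputable def S1Lm : (W →₀ ℚ) →ₗ[ℚ] (W →₀ ℚ) :=
  Finsupp.linearCombination ℚ S1

lemma S1L_eq (x : W →₀ ℚ) : S1L x = S1Lm x := by
  rw [S1Lm, Finsupp.linearCombination_apply]; rfl

lemma Dm_single (a : ℕ) (w : W) (c : ℚ) : Dm a (Finsupp.single w c) = c • diaWord a w := by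
  simp [Dm]

lemma S1Lm_single (w : W) (c : ℚ) : S1Lm (Finsupp.single w c) = c • S1 w := by
  simp [S1Lm]

lemma addPre_addPre (d₁ d₂ e₁ e₂ : ℕ) (w : W) :
    addPre d₁ d₂ (addPre e₁ e₂ w) = addPre (e₁ + d₁) (e₂ + d₂) w := by
  cases w with
  | nil => rfl
  | cons h t =>
    obtain ⟨m, k, b⟩ := h
    simp [addPre]; constructor <;> omega

lemma addPre_cons (d₁ d₂ m k : ℕ) (b : ℕ) (w : W) :
    addPre d₁ d₂ ((m, k, b) :: w) = (m + d₁, k + d₂, b) :: w := rfl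

lemma diaWord_addPre (a d₁ d₂ : ℕ) (w : W) :
    diaWord a (addPre d₁ d₂ w) = Finsupp.mapDomain (addPre d₁ d₂) (diaWord a w) := by
  cases w with
  | nil => simp [addPre, diaWord]
  | cons h t =>
    obtain ⟨m, k, b⟩ := h
    simp [addPre, diaWord, Finsupp.mapDomain_single, addPre_cons]

lemma Dm_mapDomain_addPre (a d₁ d₂ : ℕ) (x : W →₀ ℚ) :
    Dm a (Finsupp.mapDomain (addPre d₁ d₂) x) = Finsupp.mapDomain (addPre d₁ d₂) (Dm a x) := by
  induction x using Finsupp.induction_linear with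
  | zero => simp
  | add f g hf hg => simp [Finsupp.mapDomain_add, map_add, hf, hg]
  | single w c =>
    simp [Finsupp.mapDomain_single, Dm_single, diaWord_addPre, Finsupp.mapDomain_smul]

lemma Dm_mapDomain_cons (a m k b : ℕ) (x : W →₀ ℚ) :
    Dm a (Finsupp.mapDomain ((m, k, b) :: ·) x) = Finsupp.mapDomain ((m, k, a + b) :: ·) x := by
  induction x using Finsupp.induction_linear with
  | zero => simp
  | add f g hf hg => simp [Finsupp.mapDomain_add, map_add, hf, hg]
  | single w c =>
    simp [Finsupp.mapDomain_single, Dm_single, diaWord, Finsupp.smul_single]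

lemma diaWord_diaWord (a b : ℕ) (w : W) : Dm a (diaWord b w) = diaWord (a + b) w := by
  cases w with
  | nil => simp [diaWord]
  | cons h t =>
    obtain ⟨m, k, c⟩ := h
    simp [diaWord, Dm_single, add_assoc]

lemma Dm_Dm (a b : ℕ) (x : W →₀ ℚ) : Dm a (Dm b x) = Dm (a + b) x := by
  induction x using Finsupp.induction_linear with
  | zero => simp
  | add f g hf hg => simp [map_add, hf, hg]
  | single w c => simp [Dm_single, map_smul, diaWord_diaWord]

lemma S1_addPre (d₁ d₂ : ℕ) (w : W) :
    S1 (addPre d₁ d₂ w) = Finsupp.mapDomain (addPre d₁ d₂) (S1 w) := by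
  cases w with
  | nil => simp [addPre, S1, Finsupp.mapDomain_single]
  | cons h t =>
    obtain ⟨m, k, b⟩ := h
    rw [addPre_cons]
    show S1 ((m + d₁, k + d₂, b) :: t) = _
    rw [S1, S1, Finsupp.mapDomain_add, ← Finsupp.mapDomain_comp, ← Finsupp.mapDomain_comp]
    congr 1
    rw [show addPre (m + d₁ + 1) (k + d₂) = (addPre d₁ d₂ ∘ addPre (m + 1) k : W → W) from
      funext fun v => by
        show _ = addPre d₁ d₂ (addPre (m + 1) k v)
        rw [addPre_addPre, show m + 1 + d₁ = m + d₁ + 1 from by omega]]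

lemma S1Lm_mapDomain_addPre (d₁ d₂ : ℕ) (x : W →₀ ℚ) :
    S1Lm (Finsupp.mapDomain (addPre d₁ d₂) x) = Finsupp.mapDomain (addPre d₁ d₂) (S1Lm x) := by
  induction x using Finsupp.induction_linear with
  | zero => simp
  | add f g hf hg => simp [Finsupp.mapDomain_add, map_add, hf, hg]
  | single w c =>
    simp [Finsupp.mapDomain_single, S1Lm_single, S1_addPre, Finsupp.mapDomain_smul]

lemma S1Lm_mapDomain_cons (m k a : ℕ) (x : W →₀ ℚ) :
    S1Lm (Finsupp.mapDomain ((m, k, a) :: ·) x)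
      = Finsupp.mapDomain ((m, k, a) :: ·) (S1Lm x)
        + Finsupp.mapDomain (addPre (m + 1) k) (Dm a (S1Lm x)) := by
  induction x using Finsupp.induction_linear with
  | zero => simp
  | add f g hf hg =>
    simp only [Finsupp.mapDomain_add, map_add, hf, hg]
    abel
  | single w c =>
    rw [Finsupp.mapDomain_single, S1Lm_single, S1Lm_single, S1]
    simp only [diaComb_eq]
    rw [map_smul, Finsupp.mapDomain_smul, Finsupp.mapDomain_smul, smul_add]

lemma S1Lm_diaWord (a : ℕ) (w : W) : S1Lm (diaWord a w) = Dm a (S1 w) := by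
  cases w with
  | nil =>
    show S1Lm (0 : W →₀ ℚ) = Dm a (Finsupp.single [] 1)
    rw [map_zero, Dm_single]
    simp [diaWord]
  | cons h t =>
    obtain ⟨m, k, b⟩ := h
    show S1Lm (Finsupp.single ((m, k, a + b) :: t) 1) = _
    rw [S1Lm_single, one_smul, S1, S1, map_add]
    simp only [diaComb_eq]
    rw [Dm_mapDomain_cons, Dm_mapDomain_addPre, Dm_Dm]

lemma S1Lm_Dm (a : ℕ) (x : W →₀ ℚ) : S1Lm (Dm a x) = Dm a (S1Lm x) := by
  induction x using Finsupp.induction_linear with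
  | zero => simp
  | add f g hf hg => simp [map_add, hf, hg]
  | single w c => rw [Dm_single, map_smul, S1Lm_diaWord, S1Lm_single, map_smul]

/-- `S^{t̄₁+t̄₂} = S^{t̄₁} ∘ S^{t̄₂}`. -/
theorem S12_eq_S1_comp_S2 (x : List (ℕ × ℕ × ℕ)) : S12 x = S1L (S2 x) := by
  induction x with
  | nil =>
    rw [S12, S2, S1L_eq, S1Lm_single, one_smul, S1]
  | cons h u ih =>
    obtain ⟨m, k, a⟩ := h
    rw [S12, S2, S1L_eq, map_add]
    simp only [diaComb_eq]
    rw [S1Lm_mapDomain_cons, S1Lm_mapDomain_addPre, S1Lm_Dm, S1L_eq] at *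
    rw [ih]
end
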